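/- arXiv:2104.09096 — 2 statements merged into one kernel-verified Lean document; each statement's English description precedes it below -/
import Mathlib

section
/- For every finite graph G with no isolated vertices, the matching cover number of G is at most max(2, L), where L is the minimum NAF load of G. In particular, if L ≥ 2 then mc(G) ≤ L. -/
/-- `M` is a matching of `G`: a set of edges of `G` that are pairwise vertex-disjoint. -/
def IsMatching {V : Type*} (G : SimpleGraph V) (M : Finset (Sym2 V)) : Prop :=
  (∀ e ∈ M, e ∈ G.edgeSet) ∧
  ∀ e ∈ M, ∀ f ∈ M, e ≠ f → ∀ v : V, ¬(v ∈ e ∧ v ∈ f)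

/-- A family of `k` matchings of `G` whose union covers every vertex. -/
def IsMatchingCover {V : Type*} (G : SimpleGraph V) (k : ℕ)
    (Ms : Fin k → Finset (Sym2 V)) : Prop :=
  (∀ i, IsMatching G (Ms i)) ∧ ∀ v : V, ∃ i, ∃ e ∈ Ms i, v ∈ e

/-- The matching cover number of `G`: the least `k` for which `k` matchings of `G`
cover all vertices. -/
noncomputable def matchingCoverNumber {V : Type*} (G : SimpleGraph V) : ℕ :=
  sInf {k : ℕ | ∃ Ms : Fin k → Finset (Sym2 V), IsMatchingCover G k Ms}

/-- A neighbor assignment function (NAF): each vertex is assigned to one of its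
neighbors. -/
def IsNAF {V : Type*} (G : SimpleGraph V) (f : V → V) : Prop :=
  ∀ v : V, G.Adj v (f v)

/-- The load of a NAF: the maximum size of a fiber of `f`. -/
def nafLoad {V : Type*} [Fintype V] [DecidableEq V] (f : V → V) : ℕ :=
  Finset.univ.sup (fun v => (Finset.univ.filter (fun u => f u = v)).card)

/-- The minimum NAF load of `G`. -/
noncomputable def minNafLoad {V : Type*} [Fintype V] [DecidableEq V]
    (G : SimpleGraph V) : ℕ :=
  sInf {k : ℕ | ∃ f : V → V, IsNAF G f ∧ nafLoad f = k}

open Function Finset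

section AuxProof

variable {V : Type*} [Fintype V] [DecidableEq V]

/-- Glue a star block (center `c`, leaves `T`) onto a partial matching cover. -/
private lemma star_step (G : SimpleGraph V) {L : ℕ} (s : Finset V) (c : V) (T : Finset V)
    (hTs : T ⊆ s) (hcs : c ∈ s) (hcT : c ∉ T) (hTne : T.Nonempty)
    (hTL : T.card ≤ L) (hadjT : ∀ t ∈ T, G.Adj c t)
    (Ms' : Fin L → Finset (Sym2 V))
    (h1 : ∀ i, ∀ e ∈ Ms' i, e ∈ G.edgeSet)
    (h2 : ∀ i, ∀ e ∈ Ms' i, ∀ e' ∈ Ms' i, e ≠ e' → ∀ v : V, ¬(v ∈ e ∧ v ∈ e'))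
    (h3 : ∀ i, ∀ e ∈ Ms' i, ∀ v ∈ e, v ∈ s \ insert c T)
    (h4 : ∀ v ∈ s \ insert c T, ∃ i, ∃ e ∈ Ms' i, v ∈ e) :
    ∃ Ms : Fin L → Finset (Sym2 V),
      (∀ i, ∀ e ∈ Ms i, e ∈ G.edgeSet) ∧
      (∀ i, ∀ e ∈ Ms i, ∀ e' ∈ Ms i, e ≠ e' → ∀ v : V, ¬(v ∈ e ∧ v ∈ e')) ∧
      (∀ i, ∀ e ∈ Ms i, ∀ v ∈ e, v ∈ s) ∧
      (∀ v ∈ s, ∃ i, ∃ e ∈ Ms i, v ∈ e) := by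
  classical
  set idx : {x // x ∈ T} → Fin L := fun t => Fin.castLE hTL (T.equivFin t) with hidxdef
  have hidxinj : ∀ t t', idx t = idx t' → t = t' := by
    intro t t' h
    exact T.equivFin.injective (Fin.castLE_injective hTL h)
  set newE : Fin L → Finset (Sym2 V) :=
    fun i => (T.attach.filter (fun t => idx t = i)).image (fun t => s(c, t.1)) with hnewdef
  have hnew_mem : ∀ i e, e ∈ newE i → ∃ t : {x // x ∈ T}, idx t = i ∧ e = s(c, t.1) := by
    intro i e he
    obtain ⟨t, ht, rfl⟩ := Finset.mem_image.1 he
    exact ⟨t, (Finset.mem_filter.1 ht).2, rfl⟩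
  have hnew_vert : ∀ i e, e ∈ newE i → ∀ v ∈ e, v ∈ insert c T := by
    intro i e he v hv
    obtain ⟨t, _, rfl⟩ := hnew_mem i e he
    rcases Sym2.mem_iff.1 hv with rfl | rfl
    · exact mem_insert_self _ _
    · exact mem_insert_of_mem t.2
  refine ⟨fun i => Ms' i ∪ newE i, ?_, ?_, ?_, ?_⟩
  · intro i e he
    rcases Finset.mem_union.1 he with he | he
    · exact h1 i e he
    · obtain ⟨t, _, rfl⟩ := hnew_mem i e he
      exact (G.mem_edgeSet).2 (hadjT t t.2)
  · intro i e he e' he' hne v ⟨hv, hv'⟩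
    rcases Finset.mem_union.1 he with he | he <;> rcases Finset.mem_union.1 he' with he' | he'
    · exact h2 i e he e' he' hne v ⟨hv, hv'⟩
    · exact (Finset.mem_sdiff.1 (h3 i e he v hv)).2 (hnew_vert i e' he' v hv')
    · exact (Finset.mem_sdiff.1 (h3 i e' he' v hv')).2 (hnew_vert i e he v hv)
    · obtain ⟨t, hti, rfl⟩ := hnew_mem i e he
      obtain ⟨t', ht'i, rfl⟩ := hnew_mem i e' he'
      have : t = t' := hidxinj t t' (hti.trans ht'i.symm)
      exact hne (by rw [this])
  · intro i e he v hv
    rcases Finset.mem_union.1 he with he | he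
    · exact (Finset.mem_sdiff.1 (h3 i e he v hv)).1
    · rcases Finset.mem_insert.1 (hnew_vert i e he v hv) with rfl | h
      · exact hcs
      · exact hTs h
  · intro v hv
    by_cases hvi : v ∈ insert c T
    · rcases Finset.mem_insert.1 hvi with hvc | hvT
      · obtain ⟨t₀, ht₀⟩ := hTne
        subst hvc
        refine ⟨idx ⟨t₀, ht₀⟩, s(v, t₀), ?_, ?_⟩
        · refine Finset.mem_union_right _ (Finset.mem_image.2 ⟨⟨t₀, ht₀⟩, ?_, rfl⟩)
          exact Finset.mem_filter.2 ⟨Finset.mem_attach _ _, rfl⟩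
        · exact Sym2.mem_iff.2 (Or.inl rfl)
      · refine ⟨idx ⟨v, hvT⟩, s(c, v), ?_, ?_⟩
        · refine Finset.mem_union_right _ (Finset.mem_image.2 ⟨⟨v, hvT⟩, ?_, rfl⟩)
          exact Finset.mem_filter.2 ⟨Finset.mem_attach _ _, rfl⟩
        · exact Sym2.mem_iff.2 (Or.inr rfl)
    · obtain ⟨i, e, he, hve⟩ := h4 v (Finset.mem_sdiff.2 ⟨hv, hvi⟩)
      exact ⟨i, e, Finset.mem_union_left _ he, hve⟩

/-- Glue a cycle block onto a partial matching cover. -/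
private lemma cycle_step (G : SimpleGraph V) {L : ℕ} (hL : 2 ≤ L) (s : Finset V)
    (z : ℕ → V) (r : ℕ) (hr : 3 ≤ r)
    (hinj : ∀ i < r, ∀ j < r, z i = z j → i = j)
    (hadjc : ∀ i, i + 1 < r → G.Adj (z i) (z (i + 1)))
    (hwrap : G.Adj (z (r - 1)) (z 0))
    (hzs : ∀ i < r, z i ∈ s)
    (Ms' : Fin L → Finset (Sym2 V))
    (h1 : ∀ i, ∀ e ∈ Ms' i, e ∈ G.edgeSet)
    (h2 : ∀ i, ∀ e ∈ Ms' i, ∀ e' ∈ Ms' i, e ≠ e' → ∀ v : V, ¬(v ∈ e ∧ v ∈ e'))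
    (h3 : ∀ i, ∀ e ∈ Ms' i, ∀ v ∈ e, v ∈ s \ (Finset.range r).image z)
    (h4 : ∀ v ∈ s \ (Finset.range r).image z, ∃ i, ∃ e ∈ Ms' i, v ∈ e) :
    ∃ Ms : Fin L → Finset (Sym2 V),
      (∀ i, ∀ e ∈ Ms i, e ∈ G.edgeSet) ∧
      (∀ i, ∀ e ∈ Ms i, ∀ e' ∈ Ms i, e ≠ e' → ∀ v : V, ¬(v ∈ e ∧ v ∈ e')) ∧
      (∀ i, ∀ e ∈ Ms i, ∀ v ∈ e, v ∈ s) ∧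
      (∀ v ∈ s, ∃ i, ∃ e ∈ Ms i, v ∈ e) := by
  classical
  set Z : Finset V := (Finset.range r).image z with hZdef
  set M0 : Finset (Sym2 V) :=
    ((Finset.range r).filter (fun i => i % 2 = 0 ∧ i + 1 < r)).image
      (fun i => s(z i, z (i + 1))) with hM0def
  set M1 : Finset (Sym2 V) := {s(z (r - 1), z 0)} with hM1def
  set N : Fin L → Finset (Sym2 V) :=
    fun i => if (i : ℕ) = 0 then M0 else if (i : ℕ) = 1 then M1 else ∅ with hNdef
  have hM0mem : ∀ e ∈ M0, ∃ i, i % 2 = 0 ∧ i + 1 < r ∧ e = s(z i, z (i + 1)) := by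
    intro e he
    obtain ⟨i, hi, rfl⟩ := Finset.mem_image.1 he
    obtain ⟨-, h1', h2'⟩ := Finset.mem_filter.1 hi
    exact ⟨i, h1', h2', rfl⟩
  have hNsub : ∀ i e, e ∈ N i → e ∈ M0 ∨ e ∈ M1 := by
    intro i e he
    simp only [hNdef] at he
    split_ifs at he with h0 h1
    · exact Or.inl he
    · exact Or.inr he
    · exact absurd he (Finset.notMem_empty e)
  have hNvert : ∀ i e, e ∈ N i → ∀ v ∈ e, v ∈ Z := by
    intro i e he v hv
    rcases hNsub i e he with he | he
    · obtain ⟨j, hj0, hjr, rfl⟩ := hM0mem e he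
      rcases Sym2.mem_iff.1 hv with rfl | rfl
      · exact Finset.mem_image.2 ⟨j, Finset.mem_range.2 (by omega), rfl⟩
      · exact Finset.mem_image.2 ⟨j + 1, Finset.mem_range.2 hjr, rfl⟩
    · rw [hM1def, Finset.mem_singleton] at he
      subst he
      rcases Sym2.mem_iff.1 hv with rfl | rfl
      · exact Finset.mem_image.2 ⟨r - 1, Finset.mem_range.2 (by omega), rfl⟩
      · exact Finset.mem_image.2 ⟨0, Finset.mem_range.2 (by omega), rfl⟩
  have hN0 : ∀ h : 0 < L, N ⟨0, h⟩ = M0 := by intro h; simp [hNdef]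
  have hN1 : ∀ h : 1 < L, N ⟨1, h⟩ = M1 := by intro h; simp [hNdef]
  refine ⟨fun i => Ms' i ∪ N i, ?_, ?_, ?_, ?_⟩
  · intro i e he
    rcases Finset.mem_union.1 he with he | he
    · exact h1 i e he
    · rcases hNsub i e he with he | he
      · obtain ⟨j, _, hjr, rfl⟩ := hM0mem e he
        exact (G.mem_edgeSet).2 (hadjc j hjr)
      · rw [hM1def, Finset.mem_singleton] at he
        subst he
        exact (G.mem_edgeSet).2 hwrap
  · intro i e he e' he' hne v ⟨hv, hv'⟩
    rcases Finset.mem_union.1 he with he | he <;> rcases Finset.mem_union.1 he' with he' | he'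
    · exact h2 i e he e' he' hne v ⟨hv, hv'⟩
    · exact (Finset.mem_sdiff.1 (h3 i e he v hv)).2 (hNvert i e' he' v hv')
    · exact (Finset.mem_sdiff.1 (h3 i e' he' v hv')).2 (hNvert i e he v hv)
    · -- both new, same index i
      simp only [hNdef] at he he'
      split_ifs at he he' with h0 h1
      · -- both in M0
        obtain ⟨a, ha0, har, rfl⟩ := hM0mem e he
        obtain ⟨b, hb0, hbr, rfl⟩ := hM0mem e' he'
        have hxy : ∃ x y, x < r ∧ y < r ∧ z x = v ∧ z y = v ∧
            (x = a ∨ x = a + 1) ∧ (y = b ∨ y = b + 1) := by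
          rcases Sym2.mem_iff.1 hv with rfl | rfl <;> rcases Sym2.mem_iff.1 hv' with h' | h'
          · exact ⟨a, b, by omega, by omega, rfl, h'.symm, Or.inl rfl, Or.inl rfl⟩
          · exact ⟨a, b + 1, by omega, by omega, rfl, h'.symm, Or.inl rfl, Or.inr rfl⟩
          · exact ⟨a + 1, b, by omega, by omega, rfl, h'.symm, Or.inr rfl, Or.inl rfl⟩
          · exact ⟨a + 1, b + 1, by omega, by omega, rfl, h'.symm, Or.inr rfl, Or.inr rfl⟩
        obtain ⟨x, y, hx, hy, hzx, hzy, hxa, hyb⟩ := hxy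
        have hxyeq : x = y := hinj x hx y hy (hzx.trans hzy.symm)
        have hab : a = b := by omega
        exact hne (by rw [hab])
      · -- both in M1
        rw [hM1def, Finset.mem_singleton] at he he'
        exact hne (he.trans he'.symm)
      · exact absurd he (Finset.notMem_empty _)
  · intro i e he v hv
    rcases Finset.mem_union.1 he with he | he
    · exact (Finset.mem_sdiff.1 (h3 i e he v hv)).1
    · obtain ⟨j, hj, rfl⟩ := Finset.mem_image.1 (hNvert i e he v hv)
      exact hzs j (Finset.mem_range.1 hj)
  · intro v hv
    by_cases hvZ : v ∈ Z
    · obtain ⟨j, hj, rfl⟩ := Finset.mem_image.1 hvZ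
      rw [Finset.mem_range] at hj
      by_cases hj2 : j % 2 = 0
      · by_cases hjr : j + 1 < r
        · refine ⟨⟨0, by omega⟩, s(z j, z (j + 1)), ?_, Sym2.mem_iff.2 (Or.inl rfl)⟩
          refine Finset.mem_union_right _ ?_
          rw [hN0 (by omega)]
          exact Finset.mem_image.2 ⟨j, Finset.mem_filter.2 ⟨Finset.mem_range.2 hj, hj2, hjr⟩, rfl⟩
        · -- j = r - 1
          have hjeq : j = r - 1 := by omega
          refine ⟨⟨1, by omega⟩, s(z (r - 1), z 0), ?_, ?_⟩
          · refine Finset.mem_union_right _ ?_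
            rw [hN1 (by omega)]
            exact Finset.mem_singleton_self _
          · rw [hjeq]
            exact Sym2.mem_iff.2 (Or.inl rfl)
      · -- j odd
        have hj1 : (j - 1) % 2 = 0 ∧ (j - 1) + 1 < r ∧ (j - 1) + 1 = j := by omega
        refine ⟨⟨0, by omega⟩, s(z (j - 1), z ((j - 1) + 1)), ?_, ?_⟩
        · refine Finset.mem_union_right _ ?_
          rw [hN0 (by omega)]
          exact Finset.mem_image.2 ⟨j - 1,
            Finset.mem_filter.2 ⟨Finset.mem_range.2 (by omega), hj1.1, hj1.2.1⟩, rfl⟩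
        · rw [hj1.2.2]
          exact Sym2.mem_iff.2 (Or.inr rfl)
    · obtain ⟨i, e, he, hve⟩ := h4 v (Finset.mem_sdiff.2 ⟨hv, hvZ⟩)
      exact ⟨i, e, Finset.mem_union_left _ he, hve⟩

/-- The main induction: a subset `s` closed under an NAF `f` with fibers of size at
most `L` (`L ≥ 2`) admits a cover of `s` by `L` matchings of `G` supported in `s`. -/
private lemma main_lemma (G : SimpleGraph V) {L : ℕ} (hL : 2 ≤ L) :
    ∀ n (s : Finset V), s.card ≤ n → ∀ f : V → V,
      (∀ v ∈ s, f v ∈ s) → (∀ v ∈ s, G.Adj v (f v)) →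
      (∀ v : V, (s.filter (fun u => f u = v)).card ≤ L) →
      ∃ Ms : Fin L → Finset (Sym2 V),
        (∀ i, ∀ e ∈ Ms i, e ∈ G.edgeSet) ∧
        (∀ i, ∀ e ∈ Ms i, ∀ e' ∈ Ms i, e ≠ e' → ∀ v : V, ¬(v ∈ e ∧ v ∈ e')) ∧
        (∀ i, ∀ e ∈ Ms i, ∀ v ∈ e, v ∈ s) ∧
        (∀ v ∈ s, ∃ i, ∃ e ∈ Ms i, v ∈ e) := by
  classical
  intro n
  induction n with
  | zero =>
    intro s hs f _ _ _
    have : s = ∅ := Finset.card_eq_zero.1 (Nat.le_antisymm hs (Nat.zero_le _))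
    subst this
    exact ⟨fun _ => ∅, by simp, by simp, by simp, by simp⟩
  | succ n IH =>
    intro s hs f hmaps hadj hload
    rcases s.eq_empty_or_nonempty with rfl | hsne
    · exact ⟨fun _ => ∅, by simp, by simp, by simp, by simp⟩
    -- remove a star block and recurse
    have remove_star : ∀ (g : V → V) (c : V) (T : Finset V),
        c ∈ s → T ⊆ s → c ∉ T → T.Nonempty → T.card ≤ L →
        (∀ t ∈ T, G.Adj c t) →
        (∀ v ∈ s, G.Adj v (g v)) →
        (∀ v : V, (s.filter (fun u => g u = v)).card ≤ L) →
        (∀ w ∈ s \ insert c T, g w ∈ s \ insert c T) →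
        ∃ Ms : Fin L → Finset (Sym2 V),
          (∀ i, ∀ e ∈ Ms i, e ∈ G.edgeSet) ∧
          (∀ i, ∀ e ∈ Ms i, ∀ e' ∈ Ms i, e ≠ e' → ∀ v : V, ¬(v ∈ e ∧ v ∈ e')) ∧
          (∀ i, ∀ e ∈ Ms i, ∀ v ∈ e, v ∈ s) ∧
          (∀ v ∈ s, ∃ i, ∃ e ∈ Ms i, v ∈ e) := by
      intro g c T hcs hTs hcT hTne hTL hadjT hg2 hg3 hclosed
      have hcard : (s \ insert c T).card ≤ n := by
        have h1 : (s \ insert c T).card < s.card :=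
          Finset.card_lt_card ((Finset.ssubset_iff_of_subset (Finset.sdiff_subset)).2
            ⟨c, hcs, fun h => (Finset.mem_sdiff.1 h).2 (Finset.mem_insert_self c T)⟩)
        omega
      obtain ⟨Ms', H1, H2, H3, H4⟩ := IH (s \ insert c T) hcard g hclosed
        (fun v hv => hg2 v (Finset.sdiff_subset hv))
        (fun v => le_trans
          (Finset.card_le_card (Finset.filter_subset_filter _ Finset.sdiff_subset)) (hg3 v))
      exact star_step G s c T hTs hcs hcT hTne hTL hadjT Ms' H1 H2 H3 H4
    -- handle any NAF with a non-periodic vertex having a preimage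
    have keyC1 : ∀ g : V → V, (∀ v ∈ s, g v ∈ s) → (∀ v ∈ s, G.Adj v (g v)) →
        (∀ v : V, (s.filter (fun u => g u = v)).card ≤ L) →
        (∃ v ∈ s, v ∉ periodicPts g ∧ (s.filter (fun u => g u = v)).Nonempty) →
        ∃ Ms : Fin L → Finset (Sym2 V),
          (∀ i, ∀ e ∈ Ms i, e ∈ G.edgeSet) ∧
          (∀ i, ∀ e ∈ Ms i, ∀ e' ∈ Ms i, e ≠ e' → ∀ v : V, ¬(v ∈ e ∧ v ∈ e')) ∧
          (∀ i, ∀ e ∈ Ms i, ∀ v ∈ e, v ∈ s) ∧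
          (∀ v ∈ s, ∃ i, ∃ e ∈ Ms i, v ∈ e) := by
      intro g hg1 hg2 hg3 hex
      set P : Finset V :=
        s.filter (fun v => v ∉ periodicPts g ∧ (s.filter (fun u => g u = v)).Nonempty)
          with hPdef
      have hPne : P.Nonempty := by
        obtain ⟨v, hv, h1', h2'⟩ := hex
        exact ⟨v, Finset.mem_filter.2 ⟨hv, h1', h2'⟩⟩
      set rank : V → ℕ :=
        fun v => (s.filter (fun w => w ∉ periodicPts g ∧ ∃ k, g^[k] w = v)).card with hrankdef
      obtain ⟨v, hvP, hmin⟩ := P.exists_min_image rank hPne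
      obtain ⟨hvs, hvnp, hTne⟩ := Finset.mem_filter.1 hvP
      set T : Finset V := s.filter (fun u => g u = v) with hTdef
      -- all leaves are non-periodic
      have hTnp : ∀ u ∈ T, u ∉ periodicPts g := by
        intro u hu hper
        obtain ⟨m, hm, hp⟩ := hper
        apply hvnp
        have : g u ∈ periodicPts g := mk_mem_periodicPts hm hp.apply
        rwa [(Finset.mem_filter.1 hu).2] at this
      -- leaves have no preimage in s
      have hTnopre : ∀ u ∈ T, ∀ w ∈ s, g w ≠ u := by
        intro u hu w hw hgw
        have huP : u ∈ P := Finset.mem_filter.2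
          ⟨(Finset.mem_filter.1 hu).1, hTnp u hu, ⟨w, Finset.mem_filter.2 ⟨hw, hgw⟩⟩⟩
        have hle := hmin u huP
        -- rank u < rank v
        have hsub : s.filter (fun w => w ∉ periodicPts g ∧ ∃ k, g^[k] w = u) ⊆
            s.filter (fun w => w ∉ periodicPts g ∧ ∃ k, g^[k] w = v) := by
          intro x hx
          obtain ⟨hxs, hxnp, k, hk⟩ := Finset.mem_filter.1 hx
          refine Finset.mem_filter.2 ⟨hxs, hxnp, k + 1, ?_⟩
          rw [iterate_succ_apply', hk, (Finset.mem_filter.1 hu).2]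
        have hvin : v ∈ s.filter (fun w => w ∉ periodicPts g ∧ ∃ k, g^[k] w = v) :=
          Finset.mem_filter.2 ⟨hvs, hvnp, 0, rfl⟩
        have hvout : v ∉ s.filter (fun w => w ∉ periodicPts g ∧ ∃ k, g^[k] w = u) := by
          intro hvin'
          obtain ⟨-, -, k, hk⟩ := Finset.mem_filter.1 hvin'
          apply hvnp
          refine mk_mem_periodicPts (n := k + 1) (Nat.succ_pos k) ?_
          show g^[k + 1] v = v
          rw [iterate_succ_apply', hk, (Finset.mem_filter.1 hu).2]
        have hlt : rank u < rank v :=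
          Finset.card_lt_card ((Finset.ssubset_iff_of_subset hsub).2 ⟨v, hvin, hvout⟩)
        omega
      -- star properties
      have hcT : v ∉ T := by
        intro hvT
        have := hg2 v hvs
        rw [(Finset.mem_filter.1 hvT).2] at this
        exact G.irrefl this
      have hadjT : ∀ t ∈ T, G.Adj v t := by
        intro t ht
        have := hg2 t (Finset.mem_filter.1 ht).1
        rw [(Finset.mem_filter.1 ht).2] at this
        exact this.symm
      have hclosed : ∀ w ∈ s \ insert v T, g w ∈ s \ insert v T := by
        intro w hw
        obtain ⟨hws, hwni⟩ := Finset.mem_sdiff.1 hw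
        refine Finset.mem_sdiff.2 ⟨hg1 w hws, fun hmem => ?_⟩
        rcases Finset.mem_insert.1 hmem with hgv | hgT
        · exact hwni (Finset.mem_insert_of_mem (Finset.mem_filter.2 ⟨hws, hgv⟩))
        · exact hTnopre _ hgT w hws rfl
      exact remove_star g v T hvs (Finset.filter_subset _ _) hcT hTne (hg3 v) hadjT
        hg2 hg3 hclosed
    -- main case split
    by_cases hC1 : ∃ v ∈ s, v ∉ periodicPts f ∧ (s.filter (fun u => f u = v)).Nonempty
    · exact keyC1 f hmaps hadj hload hC1
    · push_neg at hC1
      have hperiodic_of_pre : ∀ v ∈ s, (∃ u ∈ s, f u = v) → v ∈ periodicPts f := by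
        intro v hv ⟨u, hu, hf⟩
        by_contra hnp
        exact Finset.not_nonempty_empty (by
          have := hC1 v hv hnp
          rw [← this]
          exact ⟨u, Finset.mem_filter.2 ⟨hu, hf⟩⟩)
      have hits : ∀ x ∈ s, ∀ k, f^[k] x ∈ s := by
        intro x hx k
        induction k with
        | zero => exact hx
        | succ k ih => rw [iterate_succ_apply']; exact hmaps _ ih
      -- find a periodic point
      obtain ⟨v₀, hv₀⟩ := hsne
      have hz₀ : ∃ z₀ ∈ s, z₀ ∈ periodicPts f := by
        obtain ⟨a, ha, b, hb, hab, heq⟩ :=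
          Finset.exists_ne_map_eq_of_card_lt_of_maps_to
            (s := Finset.range (s.card + 1)) (t := s)
            (by rw [Finset.card_range]; omega) (fun k _ => hits v₀ hv₀ k)
        have key : ∀ a b : ℕ, a < b → f^[a] v₀ = f^[b] v₀ → ∃ z₀ ∈ s, z₀ ∈ periodicPts f := by
          intro a b hlt heq
          refine ⟨f^[a] v₀, hits v₀ hv₀ a, mk_mem_periodicPts (n := b - a) (by omega) ?_⟩
          show f^[b - a] (f^[a] v₀) = f^[a] v₀
          rw [← iterate_add_apply, (by omega : b - a + a = b)]
          exact heq.symm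
        rcases Nat.lt_or_ge a b with h | h
        · exact key a b h heq
        · exact key b a (by omega) heq.symm
      obtain ⟨z₀, hz₀s, hz₀per⟩ := hz₀
      set r : ℕ := minimalPeriod f z₀ with hrdef
      have hrpos : 0 < r := minimalPeriod_pos_of_mem_periodicPts hz₀per
      have hiter_r : f^[r] z₀ = z₀ := isPeriodicPt_minimalPeriod f z₀
      have hfz₀ : f z₀ ≠ z₀ := fun h => G.irrefl (h ▸ hadj z₀ hz₀s)
      have hr2 : 2 ≤ r := by
        by_contra h
        have hr1 : r = 1 := by omega
        apply hfz₀
        have h2 := hiter_r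
        rw [hr1] at h2
        simpa using h2
      set Z : Finset V := (Finset.range r).image (fun i => f^[i] z₀) with hZdef
      have hZs : ∀ x ∈ Z, x ∈ s := by
        intro x hx
        obtain ⟨i, hi, rfl⟩ := Finset.mem_image.1 hx
        exact hits z₀ hz₀s i
      have hperZ : ∀ m, f^[m] z₀ ∈ Z := by
        intro m
        exact Finset.mem_image.2 ⟨m % r, Finset.mem_range.2 (Nat.mod_lt _ hrpos),
          iterate_mod_minimalPeriod_eq⟩
      have hinj : ∀ i < r, ∀ j < r, f^[i] z₀ = f^[j] z₀ → i = j := by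
        intro i hi j hj h
        exact iterate_injOn_Iio_minimalPeriod (Set.mem_Iio.2 hi) (Set.mem_Iio.2 hj) h
      have hper_in_Z : ∀ x, x ∈ periodicPts f → f x ∈ Z → x ∈ Z := by
        intro x hx hfx
        obtain ⟨m, hm, hmx⟩ := hx
        obtain ⟨k, hk, hkx⟩ := Finset.mem_image.1 hfx
        have hkx' : f^[k] z₀ = f x := hkx
        have h1 : f^[m - 1] (f x) = x := by
          have e1 : f^[m - 1] (f x) = f^[m] x := by
            rw [← iterate_succ_apply]
            congr 1
            omega
          rw [e1]; exact hmx
        rw [← hkx', ← iterate_add_apply] at h1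
        rw [← h1]
        exact hperZ _
      have hfinj : ∀ a < r, ∀ b < r, f (f^[a] z₀) = f (f^[b] z₀) → a = b := by
        intro a ha b hb h
        have h' : f^[(a + 1) % r] z₀ = f^[(b + 1) % r] z₀ := by
          rw [iterate_mod_minimalPeriod_eq, iterate_mod_minimalPeriod_eq,
            iterate_succ_apply', iterate_succ_apply']
          exact h
        have heq := hinj _ (Nat.mod_lt _ hrpos) _ (Nat.mod_lt _ hrpos) h'
        by_cases h1 : a + 1 < r <;> by_cases h2 : b + 1 < r
        · rw [Nat.mod_eq_of_lt h1, Nat.mod_eq_of_lt h2] at heq; omega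
        · have hb1 : b + 1 = r := by omega
          rw [Nat.mod_eq_of_lt h1, hb1, Nat.mod_self] at heq; omega
        · have ha1 : a + 1 = r := by omega
          rw [ha1, Nat.mod_self, Nat.mod_eq_of_lt h2] at heq; omega
        · omega
      by_cases hleaf : ∃ u ∈ s, u ∉ Z ∧ f u ∈ Z
      · obtain ⟨u, hus, huZ, hfuZ⟩ := hleaf
        obtain ⟨k, hkr, hkz'⟩ := Finset.mem_image.1 hfuZ
        rw [Finset.mem_range] at hkr
        have hkz : f^[k] z₀ = f u := hkz'
        -- predecessor p of z := f u on the cycle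
        set p : V := f^[(k + r - 1) % r] z₀ with hpdef
        have hpZ : p ∈ Z := hperZ _
        have hps : p ∈ s := hZs p hpZ
        have hfp : f p = f u := by
          rw [hpdef]
          have h1 : f (f^[(k + r - 1) % r] z₀) = f^[(k + r - 1) % r + 1] z₀ :=
            (iterate_succ_apply' f _ z₀).symm
          rw [h1, ← iterate_mod_minimalPeriod_eq (n := (k + r - 1) % r + 1)]
          rw [Nat.mod_add_mod, (by omega : k + r - 1 + 1 = k + r)]
          rw [Nat.add_mod_right, Nat.mod_eq_of_lt hkr]
          exact hkz
        have huz : u ≠ f u := by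
          intro h
          have h2 := hadj u hus
          rw [← h] at h2
          exact G.irrefl h2
        have hzs' : f u ∈ s := hZs _ hfuZ
        have hpne : p ≠ f u := by
          intro h
          apply G.irrefl (v := f u)
          have := hadj (f u) hzs'
          rw [show f (f u) = f u from by rw [← h, hfp, h]] at this
          exact this
        by_cases hq : ∃ q ∈ s, q ≠ f u ∧ f q = p
        · obtain ⟨q, hqs, hqz, hqp⟩ := hq
          set g : V → V := Function.update f (f u) u with hgdef
          have huneq : u ≠ f u := huz
          have hgu : g u = f u := by rw [hgdef, Function.update_of_ne huneq]
          have hgz : g (f u) = u := by rw [hgdef, Function.update_self]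
          have hgother : ∀ w, w ≠ f u → g w = f w := fun w hw => Function.update_of_ne hw _ _
          have hg1 : ∀ w ∈ s, g w ∈ s := by
            intro w hw
            by_cases hwz : w = f u
            · rw [hwz, hgz]; exact hus
            · rw [hgother w hwz]; exact hmaps w hw
          have hg2 : ∀ w ∈ s, G.Adj w (g w) := by
            intro w hw
            by_cases hwz : w = f u
            · rw [hwz, hgz]
              exact (hadj u hus).symm
            · rw [hgother w hwz]; exact hadj w hw
          have hunp : u ∉ periodicPts f := by
            intro hper
            exact huZ (hper_in_Z u hper hfuZ)
          have hg3 : ∀ w : V, (s.filter (fun x => g x = w)).card ≤ L := by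
            intro w
            by_cases hwu : w = u
            · have hsub : s.filter (fun x => g x = w) ⊆ {f u} := by
                intro x hx
                obtain ⟨hxs, hxg⟩ := Finset.mem_filter.1 hx
                by_cases hxz : x = f u
                · rw [hxz]; exact Finset.mem_singleton_self _
                · exfalso
                  rw [hgother x hxz, hwu] at hxg
                  exact hunp (hperiodic_of_pre u hus ⟨x, hxs, hxg⟩)
              calc (s.filter (fun x => g x = w)).card ≤ ({f u} : Finset V).card :=
                    Finset.card_le_card hsub
                _ ≤ L := by simp; omega
            · have hsub : s.filter (fun x => g x = w) ⊆ s.filter (fun x => f x = w) := by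
                intro x hx
                obtain ⟨hxs, hxg⟩ := Finset.mem_filter.1 hx
                by_cases hxz : x = f u
                · exfalso; rw [hxz, hgz] at hxg; exact hwu hxg.symm
                · rw [hgother x hxz] at hxg
                  exact Finset.mem_filter.2 ⟨hxs, hxg⟩
              exact le_trans (Finset.card_le_card hsub) (hload w)
          have hppre : (s.filter (fun x => g x = p)).Nonempty :=
            ⟨q, Finset.mem_filter.2 ⟨hqs, by rw [hgother q hqz]; exact hqp⟩⟩
          have hpumem : p ≠ u := fun h => huZ (h ▸ hpZ)
          have hpnper : p ∉ periodicPts g := by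
            intro hper
            obtain ⟨m, hm, hmp⟩ := hper
            have horb : ∀ j, g^[j + 1] p = f u ∨ g^[j + 1] p = u := by
              intro j
              induction j with
              | zero =>
                left
                show g p = f u
                rw [hgother p hpne]; exact hfp
              | succ j ih =>
                rw [iterate_succ_apply']
                rcases ih with h | h
                · rw [h, hgz]; exact Or.inr rfl
                · rw [h, hgu]; exact Or.inl rfl
            have := horb (m - 1)
            rw [(by omega : m - 1 + 1 = m)] at this
            have hmp' : g^[m] p = p := hmp
            rw [hmp'] at this
            rcases this with h | h
            · exact hpne h
            · exact hpumem h
          exact keyC1 g hg1 hg2 hg3 ⟨p, hps, hpnper, hppre⟩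
        · -- star at z := f u
          push_neg at hq
          set T : Finset V := s.filter (fun w => f w = f u) with hTdef
          have hTne : T.Nonempty := ⟨u, Finset.mem_filter.2 ⟨hus, rfl⟩⟩
          have hzT : f u ∉ T := by
            intro h
            exact G.irrefl ((Finset.mem_filter.1 h).2 ▸ hadj (f u) hzs')
          have hadjT : ∀ t ∈ T, G.Adj (f u) t := by
            intro t ht
            have := hadj t (Finset.mem_filter.1 ht).1
            rw [(Finset.mem_filter.1 ht).2] at this
            exact this.symm
          have hclosed : ∀ w ∈ s \ insert (f u) T, f w ∈ s \ insert (f u) T := by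
            intro w hw
            obtain ⟨hws, hwni⟩ := Finset.mem_sdiff.1 hw
            have hwz : w ≠ f u := fun h => hwni (h ▸ Finset.mem_insert_self _ _)
            refine Finset.mem_sdiff.2 ⟨hmaps w hws, fun hmem => ?_⟩
            rcases Finset.mem_insert.1 hmem with hfw | hfwT
            · exact hwni (Finset.mem_insert_of_mem (Finset.mem_filter.2 ⟨hws, hfw⟩))
            · -- f w ∈ T : f (f w) = f u
              obtain ⟨hfws, hffw⟩ := Finset.mem_filter.1 hfwT
              have hfwz : f w ≠ f u := fun h =>
                hwni (Finset.mem_insert_of_mem (Finset.mem_filter.2 ⟨hws, h⟩))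
              by_cases hfwZ : f w ∈ Z
              · -- then f w = p, contradicting hq
                obtain ⟨a, har, haz'⟩ := Finset.mem_image.1 hfwZ
                rw [Finset.mem_range] at har
                have haz : f^[a] z₀ = f w := haz'
                have hthis : a = (k + r - 1) % r := by
                  apply hfinj a har _ (Nat.mod_lt _ hrpos)
                  show f (f^[a] z₀) = f (f^[(k + r - 1) % r] z₀)
                  rw [haz, hffw, ← hpdef, hfp]
                have hfwp : f w = p := by
                  rw [← haz, hthis, ← hpdef]
                exact hq w hws hwz hfwp
              · -- f w not on cycle, so f w non-periodic, so no preimage; but w is one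
                have hfwnp : f w ∉ periodicPts f := by
                  intro hper
                  apply hfwZ
                  apply hper_in_Z _ hper
                  rw [hffw]; exact hfuZ
                exact hfwnp (hperiodic_of_pre (f w) hfws ⟨w, hws, rfl⟩)
          exact remove_star f (f u) T hzs' (Finset.filter_subset _ _) hzT hTne
            (hload (f u)) hadjT hadj hload hclosed
      · -- no leaf on the cycle
        push_neg at hleaf
        by_cases hr3 : 3 ≤ r
        · -- cycle block
          have hz₀Z : z₀ ∈ Z := Finset.mem_image.2 ⟨0, Finset.mem_range.2 (by omega), rfl⟩
          have hcard : (s \ Z).card ≤ n := by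
            have h1 : (s \ Z).card < s.card :=
              Finset.card_lt_card ((Finset.ssubset_iff_of_subset (Finset.sdiff_subset)).2
                ⟨z₀, hz₀s, fun h => (Finset.mem_sdiff.1 h).2 hz₀Z⟩)
            omega
          have hclosed : ∀ w ∈ s \ Z, f w ∈ s \ Z := by
            intro w hw
            obtain ⟨hws, hwZ⟩ := Finset.mem_sdiff.1 hw
            exact Finset.mem_sdiff.2 ⟨hmaps w hws, hleaf w hws hwZ⟩
          obtain ⟨Ms', H1, H2, H3, H4⟩ := IH (s \ Z) hcard f hclosed
            (fun v hv => hadj v (Finset.sdiff_subset hv))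
            (fun v => le_trans
              (Finset.card_le_card (Finset.filter_subset_filter _ Finset.sdiff_subset))
              (hload v))
          refine cycle_step G hL s (fun i => f^[i] z₀) r hr3 hinj ?_ ?_
            (fun i hi => hits z₀ hz₀s i) Ms' H1 H2 H3 H4
          · intro i hi
            show G.Adj (f^[i] z₀) (f^[i + 1] z₀)
            rw [iterate_succ_apply']
            exact hadj _ (hits z₀ hz₀s i)
          · show G.Adj (f^[r - 1] z₀) (f^[0] z₀)
            have h1 : f (f^[r - 1] z₀) = z₀ := by
              have e2 : f^[r - 1 + 1] z₀ = f^[r] z₀ := by congr 1; omega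
              have e1 : f (f^[r - 1] z₀) = f^[r] z₀ :=
                (iterate_succ_apply' f (r - 1) z₀).symm.trans e2
              rw [e1]; exact hiter_r
            have h2 := hadj (f^[r - 1] z₀) (hits z₀ hz₀s (r - 1))
            rw [h1] at h2
            exact h2
        · -- r = 2 : star {z₀, f z₀}
          have hr2' : r = 2 := by omega
          have hZeq : Z = insert z₀ {f z₀} := by
            ext x
            simp only [hZdef, Finset.mem_image, Finset.mem_range, hr2',
              Finset.mem_insert, Finset.mem_singleton]
            constructor
            · rintro ⟨i, hi, rfl⟩
              interval_cases i
              · exact Or.inl rfl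
              · exact Or.inr (by simp)
            · rintro (rfl | rfl)
              · exact ⟨0, by omega, rfl⟩
              · exact ⟨1, by omega, by simp⟩
          have hfz₀s : f z₀ ∈ s := hmaps z₀ hz₀s
          have hclosed : ∀ w ∈ s \ insert z₀ {f z₀}, f w ∈ s \ insert z₀ {f z₀} := by
            intro w hw
            obtain ⟨hws, hwZ⟩ := Finset.mem_sdiff.1 hw
            rw [← hZeq] at hwZ ⊢
            exact Finset.mem_sdiff.2 ⟨hmaps w hws, hleaf w hws hwZ⟩
          refine remove_star f z₀ {f z₀} hz₀s ?_ ?_ ⟨f z₀, Finset.mem_singleton_self _⟩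
            ?_ ?_ hadj hload hclosed
          · intro x hx
            rw [Finset.mem_singleton] at hx
            rw [hx]; exact hfz₀s
          · rw [Finset.mem_singleton]; exact fun h => hfz₀ h.symm
          · simp; omega
          · intro t ht
            rw [Finset.mem_singleton] at ht
            rw [ht]; exact hadj z₀ hz₀s

end AuxProof

/-- The matching cover number of a finite graph with no isolated vertices is at most
`max 2 L`, where `L` is the minimum NAF load. In particular if `L ≥ 2` then
`mc(G) ≤ L`. -/
theorem matchingCoverNumber_le_max_two_minNafLoad {V : Type*} [Fintype V] [DecidableEq V]
    (G : SimpleGraph V) (hiso : ∀ v : V, ∃ w, G.Adj v w) :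
    matchingCoverNumber G ≤ max 2 (minNafLoad G) ∧
    (2 ≤ minNafLoad G → matchingCoverNumber G ≤ minNafLoad G) := by
  classical
  have hne : {k : ℕ | ∃ f : V → V, IsNAF G f ∧ nafLoad f = k}.Nonempty := by
    refine ⟨nafLoad (fun v => (hiso v).choose), fun v => (hiso v).choose, ?_, rfl⟩
    exact fun v => (hiso v).choose_spec
  have hmem : minNafLoad G ∈ {k : ℕ | ∃ f : V → V, IsNAF G f ∧ nafLoad f = k} :=
    Nat.sInf_mem hne
  obtain ⟨f, hf, hfl⟩ := hmem
  set L : ℕ := max 2 (minNafLoad G) with hLdef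
  have hL2 : 2 ≤ L := le_max_left _ _
  have hload : ∀ v : V, ((Finset.univ : Finset V).filter (fun u => f u = v)).card ≤ L := by
    intro v
    have h1 : ((Finset.univ : Finset V).filter (fun u => f u = v)).card ≤ nafLoad f := by
      unfold nafLoad
      exact Finset.le_sup (f := fun w => ((Finset.univ : Finset V).filter
        (fun u => f u = w)).card) (Finset.mem_univ v)
    rw [hfl] at h1
    exact le_trans h1 (le_max_right _ _)
  obtain ⟨Ms, H1, H2, H3, H4⟩ := main_lemma G hL2 (Finset.univ : Finset V).card
    Finset.univ le_rfl f (fun v _ => Finset.mem_univ _) (fun v _ => hf v) hload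
  have hcover : IsMatchingCover G L Ms :=
    ⟨fun i => ⟨H1 i, H2 i⟩, fun v => H4 v (Finset.mem_univ v)⟩
  have hmc : matchingCoverNumber G ≤ L := Nat.sInf_le ⟨Ms, hcover⟩
  exact ⟨hmc, fun h2 => by rwa [hLdef, max_eq_right h2] at hmc⟩
end

section
/- For every finite graph G with no isolated vertices, the minimum NAF load equals the matching cover number, unless the minimum NAF load equals 1, in which case the matching cover number is 1 or 2. -/
open Function Finset
open scoped Classical in
noncomputable def fcore {V : Type*} (f : V → V) : V → Prop := fun v => ∃ m, 0 < m ∧ f^[m] v = v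

open scoped Classical in
noncomputable def anc {V : Type*} [Fintype V] (f : V → V) (v : V) : Finset V :=
  Finset.univ.filter (fun u => ¬ fcore f u ∧ ∃ m, 0 < m ∧ f^[m] u = v)

lemma anc_ssubset {V : Type*} [Fintype V] {f : V → V} {c v : V} (hc : f c = v)
    (hnc : ¬ fcore f c) : anc f c ⊂ anc f v := by
  classical
  constructor
  · intro u hu
    simp only [anc, Finset.mem_filter, Finset.mem_univ, true_and] at hu ⊢
    obtain ⟨h1, m, hm, h2⟩ := hu
    exact ⟨h1, m + 1, Nat.succ_pos m, by rw [Function.iterate_succ_apply', h2, hc]⟩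
  · intro hsub
    have hcv : c ∈ anc f v := by
      simp only [anc, Finset.mem_filter, Finset.mem_univ, true_and]
      exact ⟨hnc, 1, one_pos, by simpa using hc⟩
    have := hsub hcv
    simp only [anc, Finset.mem_filter, Finset.mem_univ, true_and] at this
    exact hnc ⟨this.2.choose, this.2.choose_spec⟩

noncomputable def kept {V : Type*} [Fintype V] (f : V → V) (v : V) : Prop :=
  ∀ c, f c = v → ¬ fcore f c → ¬ kept f c
termination_by (anc f v).card
decreasing_by exact Finset.card_lt_card (anc_ssubset (by assumption) (by assumption))

lemma kept_iff {V : Type*} [Fintype V] (f : V → V) (v : V) :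
    kept f v ↔ ∀ c, f c = v → ¬ fcore f c → ¬ kept f c := by
  rw [show kept f v = _ from kept.eq_def f v]




open scoped Classical in
noncomputable def runc (K : ℕ → Prop) : ℕ → ℕ
  | 0 => 0
  | (j+1) => if K j then runc K j + 1 else 0

lemma runc_succ_of (K : ℕ → Prop) (j : ℕ) (h : K j) :
    runc K (j+1) = runc K j + 1 := by
  classical
  rw [runc]
  simp [h]

lemma pathCover {V : Type*} (G : SimpleGraph V) (m : ℕ) (b : ℕ → V) (K : ℕ → Prop)
    (hinj : ∀ i ≤ m, ∀ j ≤ m, b i = b j → i = j)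
    (hadj : ∀ j < m, G.Adj (b j) (b (j+1))) :
    ∃ M0 M1 : Finset (Sym2 V),
      IsMatching G M0 ∧ IsMatching G M1 ∧
      (∀ e, (e ∈ M0 ∨ e ∈ M1) → ∃ j, j < m ∧ K j ∧ e = s(b j, b (j+1))) ∧
      (∀ j, j < m → K j → s(b j, b (j+1)) ∈ M0 ∨ s(b j, b (j+1)) ∈ M1) ∧
      (∀ w, (¬ ∃ j, j < m ∧ K j ∧ w = b j) →
        (∀ e ∈ M0, w ∉ e) ∨ (∀ e ∈ M1, w ∉ e)) := by
  classical
  set Mf : ℕ → Finset (Sym2 V) := fun i =>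
    ((Finset.range m).filter (fun j => K j ∧ runc K j % 2 = i)).image
      (fun j => s(b j, b (j+1))) with hMf
  have hmem : ∀ i e, e ∈ Mf i ↔ ∃ j, j < m ∧ K j ∧ runc K j % 2 = i ∧
      e = s(b j, b (j+1)) := by
    intro i e
    simp only [hMf, Finset.mem_image, Finset.mem_filter, Finset.mem_range]
    constructor
    · rintro ⟨j, ⟨h1, h2, h3⟩, h4⟩; exact ⟨j, h1, h2, h3, h4.symm⟩
    · rintro ⟨j, h1, h2, h3, h4⟩; exact ⟨j, ⟨h1, h2, h3⟩, h4.symm⟩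
  have hidx : ∀ x y : ℕ, x ≤ m → y ≤ m → b x = b y → x = y := fun x y hx hy h =>
    hinj x hx y hy h
  have hmatch : ∀ i, IsMatching G (Mf i) := by
    intro i
    refine ⟨fun e he => ?_, ?_⟩
    · obtain ⟨j, hj, -, -, rfl⟩ := (hmem i e).1 he
      exact (hadj j hj)
    · intro e he e' he' hne v hv
      obtain ⟨j, hj, hKj, hpj, rfl⟩ := (hmem i e).1 he
      obtain ⟨j', hj', hKj', hpj', rfl⟩ := (hmem i e').1 he'
      obtain ⟨hv1, hv2⟩ := hv
      rw [Sym2.mem_iff] at hv1 hv2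
      have hjj' : j ≠ j' := fun h => hne (by rw [h])
      have adjc : ∀ a a' : ℕ, K a → runc K a % 2 = i → runc K a' % 2 = i →
          a + 1 = a' → False := by
        intro a a' hKa hp1 hp2 heq
        have h1 : runc K a' = runc K a + 1 := by rw [← heq, runc_succ_of K a hKa]
        omega
      rcases hv1 with h1 | h1 <;> rcases hv2 with h2 | h2
      · exact hjj' (hidx j j' hj.le hj'.le (h1.symm.trans h2))
      · exact adjc j' j hKj' hpj' hpj
          (hidx (j'+1) j hj' hj.le (h2.symm.trans h1))
      · exact adjc j j' hKj hpj hpj' (hidx (j+1) j' hj hj'.le (h1.symm.trans h2))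
      · exact hjj' (by
          have := hidx (j+1) (j'+1) hj hj' (h1.symm.trans h2); omega)
  refine ⟨Mf 0, Mf 1, hmatch 0, hmatch 1, ?_, ?_, ?_⟩
  · intro e he
    rcases he with he | he
    · obtain ⟨j, hj, hK, -, rfl⟩ := (hmem 0 e).1 he; exact ⟨j, hj, hK, rfl⟩
    · obtain ⟨j, hj, hK, -, rfl⟩ := (hmem 1 e).1 he; exact ⟨j, hj, hK, rfl⟩
  · intro j hj hK
    rcases Nat.mod_two_eq_zero_or_one (runc K j) with h | h
    · exact Or.inl ((hmem 0 _).2 ⟨j, hj, hK, h, rfl⟩)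
    · exact Or.inr ((hmem 1 _).2 ⟨j, hj, hK, h, rfl⟩)
  · intro w hw
    by_cases h0 : ∃ e ∈ Mf 0, w ∈ e
    · right
      obtain ⟨e, he, hwe⟩ := h0
      obtain ⟨j, hj, hKj, hpj, rfl⟩ := (hmem 0 e).1 he
      intro e' he' hwe'
      obtain ⟨j', hj', hKj', hpj', rfl⟩ := (hmem 1 e').1 he'
      rw [Sym2.mem_iff] at hwe hwe'
      rcases hwe with h1 | h1
      · exact hw ⟨j, hj, hKj, h1⟩
      rcases hwe' with h2 | h2
      · exact hw ⟨j', hj', hKj', h2⟩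
      have : j + 1 = j' + 1 := hidx (j+1) (j'+1) hj hj' (h1.symm.trans h2)
      have : j = j' := by omega
      subst this
      omega
    · exact Or.inl (fun e he hwe => h0 ⟨e, he, hwe⟩)

lemma cycLemma {V : Type*} [Fintype V] [DecidableEq V] (G : SimpleGraph V) (f : V → V)
    (hf : ∀ v, G.Adj v (f v)) (P : V → Prop) :
    ∀ n (S : Finset V), S.card ≤ n → (∀ w ∈ S, f w ∈ S) →
    (∀ w ∈ S, ∀ x ∈ S, f w = f x → w = x) → (∀ w ∈ S, ∃ x ∈ S, f x = w) →
    ∃ M0 M1 : Finset (Sym2 V), IsMatching G M0 ∧ IsMatching G M1 ∧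
      (∀ e, (e ∈ M0 ∨ e ∈ M1) → ∃ w ∈ S, ¬ P w ∧ e = s(w, f w)) ∧
      (∀ w ∈ S, ¬ P w → (∃ e ∈ M0, w ∈ e) ∨ (∃ e ∈ M1, w ∈ e)) ∧
      (∀ w, P w → (∀ e ∈ M0, w ∉ e) ∨ (∀ e ∈ M1, w ∉ e)) := by
  classical
  intro n
  induction n with
  | zero =>
      intro S hcard _ _ _
      have hS : S = ∅ := Finset.card_eq_zero.1 (Nat.le_zero.1 hcard)
      subst hS
      exact ⟨∅, ∅, ⟨by simp, by simp⟩, ⟨by simp, by simp⟩, by simp, by simp,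
        fun w _ => Or.inl (by simp)⟩
  | succ n ih =>
      intro S hcard hcl hinj hsurj
      rcases S.eq_empty_or_nonempty with rfl | ⟨w₀, hw₀⟩
      · exact ⟨∅, ∅, ⟨by simp, by simp⟩, ⟨by simp, by simp⟩, by simp, by simp,
          fun w _ => Or.inl (by simp)⟩
      -- iterates stay in S
      have hiterS : ∀ w ∈ S, ∀ j, f^[j] w ∈ S := by
        intro w hw j
        induction j with
        | zero => simpa using hw
        | succ j ihj => rw [Function.iterate_succ_apply']; exact hcl _ ihj
      have hcancel : ∀ i, ∀ a ∈ S, ∀ b ∈ S, f^[i] a = f^[i] b → a = b := by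
        intro i
        induction i with
        | zero => intro a ha b hb h; simpa using h
        | succ i ihi =>
            intro a ha b hb h
            rw [Function.iterate_succ_apply, Function.iterate_succ_apply] at h
            exact hinj a ha b hb (ihi (f a) (hcl a ha) (f b) (hcl b hb) h)
      -- periodicity of w₀
      have hper : ∃ p, 0 < p ∧ f^[p] w₀ = w₀ := by
        have hmaps : ∀ i ∈ Finset.range (S.card + 1), f^[i] w₀ ∈ S :=
          fun i _ => hiterS w₀ hw₀ i
        obtain ⟨i, hi, j, hj, hne, heq⟩ :=
          Finset.exists_ne_map_eq_of_card_lt_of_maps_to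
            (by simp) hmaps
        rcases Nat.lt_or_ge i j with hij | hij
        · refine ⟨j - i, by omega, ?_⟩
          have : f^[i] (f^[j - i] w₀) = f^[i] w₀ := by
            rw [← Function.iterate_add_apply]
            rw [show i + (j - i) = j by omega]
            exact heq.symm
          exact hcancel i _ (hiterS w₀ hw₀ _) w₀ hw₀ this
        · have hij' : j < i := by omega
          refine ⟨i - j, by omega, ?_⟩
          have : f^[j] (f^[i - j] w₀) = f^[j] w₀ := by
            rw [← Function.iterate_add_apply]
            rw [show j + (i - j) = i by omega]
            exact heq
          exact hcancel j _ (hiterS w₀ hw₀ _) w₀ hw₀ this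
      obtain ⟨p, hp0, hpw⟩ := hper
      set L := Function.minimalPeriod f w₀ with hLdef
      have hLw : f^[L] w₀ = w₀ := Function.iterate_minimalPeriod
      have hL0 : 0 < L := Function.IsPeriodicPt.minimalPeriod_pos hp0 hpw
      have hL2 : 2 ≤ L := by
        rcases Nat.lt_or_ge L 2 with h | h
        · exfalso
          have hL1 : L = 1 := by omega
          rw [hL1] at hLw
          exact (hf w₀).ne' (by simpa using hLw)
        · exact h
      have hLle : ∀ q, 0 < q → f^[q] w₀ = w₀ → L ≤ q :=
        fun q hq hqw => Function.IsPeriodicPt.minimalPeriod_le hq hqw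
      have hmul : ∀ q, f^[L * q] w₀ = w₀ := by
        intro q
        induction q with
        | zero => simp
        | succ q ihq =>
            rw [Nat.mul_succ, Function.iterate_add_apply, hLw, ihq]
      have hmod : ∀ a, f^[a] w₀ = f^[a % L] w₀ := by
        intro a
        conv_lhs => rw [show a = a % L + L * (a / L) from (Nat.mod_add_div a L).symm]
        rw [Function.iterate_add_apply, hmul]
      have hinjL : ∀ i < L, ∀ j < L, f^[i] w₀ = f^[j] w₀ → i = j := by
        have key : ∀ i j, i ≤ j → j < L → f^[i] w₀ = f^[j] w₀ → i = j := by
          intro i j hij hjL heq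
          have : w₀ = f^[j - i] w₀ := by
            refine hcancel i w₀ hw₀ _ (hiterS w₀ hw₀ _) ?_
            rw [← Function.iterate_add_apply, show i + (j - i) = j by omega]
            exact heq
          by_contra hne
          have : L ≤ j - i := hLle (j - i) (by omega) this.symm
          omega
        intro i hi j hj heq
        rcases le_or_gt i j with h | h
        · exact key i j h hj heq
        · exact (key j i h.le hi heq.symm).symm
      set O : Finset V := (Finset.range L).image (fun j => f^[j] w₀) with hOdef
      have hmemO : ∀ x, x ∈ O ↔ ∃ j < L, f^[j] w₀ = x := by
        intro x; simp [hOdef]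
      have hOS : O ⊆ S := by
        intro x hx
        obtain ⟨j, _, rfl⟩ := (hmemO x).1 hx
        exact hiterS w₀ hw₀ j
      have hw₀O : w₀ ∈ O := (hmemO w₀).2 ⟨0, hL0, rfl⟩
      have hfO : ∀ x ∈ O, f x ∈ O := by
        intro x hx
        obtain ⟨j, hj, rfl⟩ := (hmemO x).1 hx
        refine (hmemO _).2 ⟨(j+1) % L, Nat.mod_lt _ hL0, ?_⟩
        rw [← hmod, Function.iterate_succ_apply']
      have hpreO : ∀ x ∈ S, f x ∈ O → x ∈ O := by
        intro x hx hfx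
        obtain ⟨j, hj, hjx⟩ := (hmemO (f x)).1 hfx
        have h1 : f (f^[j + L - 1] w₀) = f x := by
          have hsa := Function.iterate_succ_apply' f (j + L - 1) w₀
          rw [← hsa, show (j + L - 1).succ = j + L by omega,
            hmod, Nat.add_mod_right, ← hmod, hjx]
        have h2 : x = f^[j + L - 1] w₀ :=
          hinj x hx _ (hiterS w₀ hw₀ _) h1.symm
        rw [h2, hmod]
        exact (hmemO _).2 ⟨(j + L - 1) % L, Nat.mod_lt _ hL0, rfl⟩
      -- orbit cover
      have horb : ∃ M0o M1o : Finset (Sym2 V), IsMatching G M0o ∧ IsMatching G M1o ∧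
          (∀ e, (e ∈ M0o ∨ e ∈ M1o) → ∃ w, w ∈ O ∧ ¬ P w ∧ e = s(w, f w)) ∧
          (∀ w ∈ O, ¬ P w → (∃ e ∈ M0o, w ∈ e) ∨ (∃ e ∈ M1o, w ∈ e)) ∧
          (∀ w, P w → (∀ e ∈ M0o, w ∉ e) ∨ (∀ e ∈ M1o, w ∉ e)) := by
        by_cases hP : ∃ t < L, P (f^[t] w₀)
        · obtain ⟨t, htL, hPt⟩ := hP
          set d' : V := f^[t+1] w₀ with hd'
          have hd'S : d' ∈ S := hiterS w₀ hw₀ _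
          set b : ℕ → V := fun j => f^[j] d' with hb
          have hbw : ∀ j, b j = f^[j + (t+1)] w₀ :=
            fun j => (Function.iterate_add_apply f j (t+1) w₀).symm
          have hfb : ∀ j, f (b j) = b (j+1) := by
            intro j; rw [hb]; exact (Function.iterate_succ_apply' f j d').symm
          have hbS : ∀ j, b j ∈ S := fun j => hiterS d' hd'S j
          have hbO : ∀ j, b j ∈ O := by
            intro j
            rw [hbw j, hmod]
            exact (hmemO _).2 ⟨(j + (t+1)) % L, Nat.mod_lt _ hL0, rfl⟩
          have hbinj : ∀ i ≤ L - 1, ∀ j ≤ L - 1, b i = b j → i = j := by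
            have hw₀d : f^[L - t - 1] d' = w₀ := by
              rw [hd', ← Function.iterate_add_apply,
                show L - t - 1 + (t + 1) = L by omega, hLw]
            have key : ∀ i j, i ≤ j → j ≤ L - 1 → b i = b j → i = j := by
              intro i j hij hjL heq
              have hji : i + (j - i) = j := by omega
              have h2 : d' = f^[j - i] d' := by
                refine hcancel i d' hd'S _ (hiterS d' hd'S _) ?_
                calc f^[i] d' = f^[j] d' := heq
                  _ = f^[i + (j - i)] d' := by rw [hji]
                  _ = f^[i] (f^[j - i] d') := Function.iterate_add_apply f i (j - i) d'
              by_contra hne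
              have h3 : f^[j - i] w₀ = w₀ := by
                calc f^[j - i] w₀ = f^[j - i] (f^[L - t - 1] d') := by rw [hw₀d]
                  _ = f^[(j - i) + (L - t - 1)] d' :=
                      (Function.iterate_add_apply f (j - i) (L - t - 1) d').symm
                  _ = f^[(L - t - 1) + (j - i)] d' := by rw [Nat.add_comm]
                  _ = f^[L - t - 1] (f^[j - i] d') :=
                      Function.iterate_add_apply f (L - t - 1) (j - i) d'
                  _ = f^[L - t - 1] d' := by rw [← h2]
                  _ = w₀ := hw₀d
              have := hLle (j - i) (by omega) h3
              omega
            intro i hi j hj heq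
            rcases le_or_gt i j with h | h
            · exact key i j h hj heq
            · exact (key j i h.le hi heq.symm).symm
          have hbadj : ∀ j, j < L - 1 → G.Adj (b j) (b (j+1)) := by
            intro j _; rw [← hfb j]; exact hf (b j)
          obtain ⟨M0o, M1o, hm0, hm1, hEp, hCp, hOnep⟩ :=
            pathCover G (L - 1) b (fun j => ¬ P (b j)) hbinj hbadj
          have hbL1 : b (L - 1) = f^[t] w₀ := by
            rw [hbw, show L - 1 + (t + 1) = t + L by omega, hmod,
              Nat.add_mod_right, ← hmod]
          refine ⟨M0o, M1o, hm0, hm1, ?_, ?_, ?_⟩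
          · intro e he
            obtain ⟨j, hj, hK, rfl⟩ := hEp e he
            exact ⟨b j, hbO j, hK, by rw [hfb j]⟩
          · intro w hwO hPw
            obtain ⟨s, hsL, hsw⟩ := (hmemO w).1 hwO
            have hcalc : ((s + (L - t - 1)) % L + (t + 1)) % L = s := by
              rw [Nat.mod_add_mod, show s + (L - t - 1) + (t + 1) = s + L from by omega,
                Nat.add_mod_right, Nat.mod_eq_of_lt hsL]
            have hjL : (s + (L - t - 1)) % L < L := Nat.mod_lt _ hL0
            have hbj : b ((s + (L - t - 1)) % L) = w := by
              rw [hbw, hmod, hcalc, hsw]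
            have hjne : (s + (L - t - 1)) % L ≠ L - 1 := by
              intro hj1
              rw [hj1, hbL1] at hbj
              exact hPw (by rw [← hbj]; exact hPt)
            have hjm : (s + (L - t - 1)) % L < L - 1 := by omega
            have := hCp _ hjm (by rw [hbj]; exact hPw)
            rcases this with h | h
            · exact Or.inl ⟨_, h, by rw [← hbj]; exact Sym2.mem_mk_left _ _⟩
            · exact Or.inr ⟨_, h, by rw [← hbj]; exact Sym2.mem_mk_left _ _⟩
          · intro w hPw
            refine hOnep w ?_
            rintro ⟨j, -, hK, rfl⟩
            exact hK hPw
        · push_neg at hP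
          set b : ℕ → V := fun j => f^[j] w₀ with hb
          have hfb : ∀ j, f (b j) = b (j+1) := by
            intro j; rw [hb]; exact (Function.iterate_succ_apply' f j w₀).symm
          have hbO : ∀ j, j < L → b j ∈ O := by
            intro j hj; exact (hmemO _).2 ⟨j, hj, rfl⟩
          have hbinj : ∀ i ≤ L - 1, ∀ j ≤ L - 1, b i = b j → i = j := by
            intro i hi j hj heq
            exact hinjL i (by omega) j (by omega) heq
          have hbadj : ∀ j, j < L - 1 → G.Adj (b j) (b (j+1)) := by
            intro j _; rw [← hfb j]; exact hf (b j)
          obtain ⟨M0o, M1o, hm0, hm1, hEp, hCp, hOnep⟩ :=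
            pathCover G (L - 1) b (fun _ => True) hbinj hbadj
          have hwO' : ∀ w, w ∈ O → ¬ P w := by
            intro w hwO
            obtain ⟨s, hsL, hsw⟩ := (hmemO w).1 hwO
            exact hsw ▸ hP s hsL
          refine ⟨M0o, M1o, hm0, hm1, ?_, ?_, ?_⟩
          · intro e he
            obtain ⟨j, hj, -, rfl⟩ := hEp e he
            exact ⟨b j, hbO j (by omega), hwO' _ (hbO j (by omega)), by rw [hfb j]⟩
          · intro w hwO hPw
            obtain ⟨s, hsL, hsw⟩ := (hmemO w).1 hwO
            rcases Nat.lt_or_ge s (L - 1) with hs | hs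
            · rcases hCp s hs trivial with h | h
              · exact Or.inl ⟨_, h, by rw [← hsw]; exact Sym2.mem_mk_left _ _⟩
              · exact Or.inr ⟨_, h, by rw [← hsw]; exact Sym2.mem_mk_left _ _⟩
            · have hsL1 : s = L - 1 := by omega
              have hm1' : L - 2 < L - 1 := by omega
              have hbm : b (L - 2 + 1) = w := by
                rw [show L - 2 + 1 = L - 1 by omega, ← hsL1, ← hsw]
              rcases hCp (L - 2) hm1' trivial with h | h
              · exact Or.inl ⟨_, h, by rw [← hbm]; exact Sym2.mem_mk_right _ _⟩
              · exact Or.inr ⟨_, h, by rw [← hbm]; exact Sym2.mem_mk_right _ _⟩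
          · intro w hPw
            left
            intro e he hwe
            obtain ⟨j, hj, -, rfl⟩ := hEp e (Or.inl he)
            rw [Sym2.mem_iff] at hwe
            rcases hwe with rfl | rfl
            · exact hwO' _ (hbO j (by omega)) hPw
            · exact hwO' _ (hbO (j+1) (by omega)) hPw
      obtain ⟨M0o, M1o, hm0, hm1, hEo, hCo, hOneo⟩ := horb
      -- recursion on S \ O
      set S' : Finset V := S \ O with hS'def
      have hS'sub : S' ⊆ S := Finset.sdiff_subset
      have hS'card : S'.card ≤ n := by
        have h1 : S'.card = S.card - O.card := Finset.card_sdiff_of_subset hOS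
        have h2 : 0 < O.card := Finset.card_pos.2 ⟨w₀, hw₀O⟩
        omega
      have hS'cl : ∀ w ∈ S', f w ∈ S' := by
        intro w hw
        rw [hS'def, Finset.mem_sdiff] at hw ⊢
        exact ⟨hcl w hw.1, fun h => hw.2 (hpreO w hw.1 h)⟩
      have hS'inj : ∀ w ∈ S', ∀ x ∈ S', f w = f x → w = x :=
        fun w hw x hx => hinj w (hS'sub hw) x (hS'sub hx)
      have hS'surj : ∀ w ∈ S', ∃ x ∈ S', f x = w := by
        intro w hw
        rw [hS'def, Finset.mem_sdiff] at hw
        obtain ⟨x, hxS, hxw⟩ := hsurj w hw.1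
        refine ⟨x, ?_, hxw⟩
        rw [hS'def, Finset.mem_sdiff]
        exact ⟨hxS, fun h => hw.2 (hxw ▸ hfO x h)⟩
      obtain ⟨M0r, M1r, hr0, hr1, hEr, hCr, hOner⟩ :=
        ih S' hS'card hS'cl hS'inj hS'surj
      have hOvert : ∀ e, (e ∈ M0o ∨ e ∈ M1o) → ∀ v ∈ e, v ∈ O := by
        intro e he v hv
        obtain ⟨w, hwO, -, rfl⟩ := hEo e he
        rw [Sym2.mem_iff] at hv
        rcases hv with rfl | rfl
        · exact hwO
        · exact hfO w hwO
      have hRvert : ∀ e, (e ∈ M0r ∨ e ∈ M1r) → ∀ v ∈ e, v ∈ S' := by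
        intro e he v hv
        obtain ⟨w, hwS, -, rfl⟩ := hEr e he
        rw [Sym2.mem_iff] at hv
        rcases hv with rfl | rfl
        · exact hwS
        · exact hS'cl w hwS
      have hdisj : ∀ v, v ∈ O → v ∈ S' → False := by
        intro v hvO hvS'
        rw [hS'def, Finset.mem_sdiff] at hvS'
        exact hvS'.2 hvO
      have hMatchU : ∀ Mo Mr, IsMatching G Mo → IsMatching G Mr →
          (∀ e ∈ Mo, ∀ v ∈ e, v ∈ O) → (∀ e ∈ Mr, ∀ v ∈ e, v ∈ S') →
          IsMatching G (Mo ∪ Mr) := by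
        intro Mo Mr hMo hMr hvo hvr
        constructor
        · intro e he
          rcases Finset.mem_union.1 he with h | h
          · exact hMo.1 e h
          · exact hMr.1 e h
        · intro e he e' he' hne v hv
          rcases Finset.mem_union.1 he with h | h <;>
            rcases Finset.mem_union.1 he' with h' | h'
          · exact hMo.2 e h e' h' hne v hv
          · exact hdisj v (hvo e h v hv.1) (hvr e' h' v hv.2)
          · exact hdisj v (hvo e' h' v hv.2) (hvr e h v hv.1)
          · exact hMr.2 e h e' h' hne v hv
      refine ⟨M0o ∪ M0r, M1o ∪ M1r,
        hMatchU M0o M0r hm0 hr0 (fun e he => hOvert e (Or.inl he))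
          (fun e he => hRvert e (Or.inl he)),
        hMatchU M1o M1r hm1 hr1 (fun e he => hOvert e (Or.inr he))
          (fun e he => hRvert e (Or.inr he)), ?_, ?_, ?_⟩
      · intro e he
        have he' : (e ∈ M0o ∨ e ∈ M1o) ∨ (e ∈ M0r ∨ e ∈ M1r) := by
          rcases he with h | h <;> rcases Finset.mem_union.1 h with h' | h'
          · exact Or.inl (Or.inl h')
          · exact Or.inr (Or.inl h')
          · exact Or.inl (Or.inr h')
          · exact Or.inr (Or.inr h')
        rcases he' with h | h
        · obtain ⟨w, hwO, hPw, rfl⟩ := hEo e h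
          exact ⟨w, hOS hwO, hPw, rfl⟩
        · obtain ⟨w, hwS, hPw, rfl⟩ := hEr e h
          exact ⟨w, hS'sub hwS, hPw, rfl⟩
      · intro w hwS hPw
        by_cases hwO : w ∈ O
        · rcases hCo w hwO hPw with ⟨e, he, hwe⟩ | ⟨e, he, hwe⟩
          · exact Or.inl ⟨e, Finset.mem_union_left _ he, hwe⟩
          · exact Or.inr ⟨e, Finset.mem_union_left _ he, hwe⟩
        · have hwS' : w ∈ S' := by rw [hS'def, Finset.mem_sdiff]; exact ⟨hwS, hwO⟩
          rcases hCr w hwS' hPw with ⟨e, he, hwe⟩ | ⟨e, he, hwe⟩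
          · exact Or.inl ⟨e, Finset.mem_union_right _ he, hwe⟩
          · exact Or.inr ⟨e, Finset.mem_union_right _ he, hwe⟩
      · intro w hPw
        by_cases hwO : w ∈ O
        · have hnr : ∀ e, (e ∈ M0r ∨ e ∈ M1r) → w ∉ e := by
            intro e he hwe
            exact hdisj w hwO (hRvert e he w hwe)
          rcases hOneo w hPw with h | h
          · left
            intro e he hwe
            rcases Finset.mem_union.1 he with h' | h'
            · exact h e h' hwe
            · exact hnr e (Or.inl h') hwe
          · right
            intro e he hwe
            rcases Finset.mem_union.1 he with h' | h'
            · exact h e h' hwe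
            · exact hnr e (Or.inr h') hwe
        · have hno : ∀ e, (e ∈ M0o ∨ e ∈ M1o) → w ∉ e := by
            intro e he hwe
            exact hwO (hOvert e he w hwe)
          rcases hOner w hPw with h | h
          · left
            intro e he hwe
            rcases Finset.mem_union.1 he with h' | h'
            · exact hno e (Or.inl h') hwe
            · exact h e h' hwe
          · right
            intro e he hwe
            rcases Finset.mem_union.1 he with h' | h'
            · exact hno e (Or.inr h') hwe
            · exact h e h' hwe

open scoped Classical in
noncomputable def fiberF {V : Type*} [Fintype V] (f : V → V) (v : V) : Finset V :=
  Finset.univ.filter (fun u => f u = v)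

open scoped Classical in
noncomputable def KC {V : Type*} [Fintype V] (f : V → V) (S : Finset V) (v : V) :
    Finset V :=
  (fiberF f v).filter (fun c => c ∉ S ∧ ¬ fcore f c ∧ kept f c)

lemma mem_fiberF {V : Type*} [Fintype V] {f : V → V} {v c : V} :
    c ∈ fiberF f v ↔ f c = v := by
  unfold fiberF
  simp only [Finset.mem_filter, Finset.mem_univ, true_and]

lemma mem_KC {V : Type*} [Fintype V] {f : V → V} {S : Finset V} {v c : V} :
    c ∈ KC f S v ↔ f c = v ∧ c ∉ S ∧ ¬ fcore f c ∧ kept f c := by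
  unfold KC
  simp only [Finset.mem_filter, mem_fiberF]

noncomputable def colorsAt {V : Type*} [DecidableEq V] (k : ℕ)
    (M : Fin k → Finset (Sym2 V)) (v : V) : ℕ :=
  (Finset.univ.filter (fun i : Fin k => ∃ e ∈ M i, v ∈ e)).card

section colorsAtAPI
variable {V : Type*} [DecidableEq V] {k : ℕ} {M : Fin k → Finset (Sym2 V)} {w : V}

lemma colorsAt_eq_zero (h : ∀ i, ∀ e ∈ M i, w ∉ e) : colorsAt k M w = 0 := by
  unfold colorsAt
  rw [Finset.card_eq_zero, Finset.eq_empty_iff_forall_notMem]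
  intro i hi
  rw [Finset.mem_filter] at hi
  obtain ⟨-, e, he, hwe⟩ := hi
  exact h i e he hwe

lemma colorsAt_le_one (i₀ : Fin k) (h : ∀ i, i ≠ i₀ → ∀ e ∈ M i, w ∉ e) :
    colorsAt k M w ≤ 1 := by
  unfold colorsAt
  calc _ ≤ ({i₀} : Finset (Fin k)).card := by
        refine Finset.card_le_card ?_
        intro i hi
        rw [Finset.mem_filter] at hi
        obtain ⟨-, e, he, hwe⟩ := hi
        rw [Finset.mem_singleton]
        by_contra hne
        exact h i hne e he hwe
    _ = 1 := Finset.card_singleton _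

lemma colorsAt_le_two (i0 i1 : Fin k) (h : ∀ i, i ≠ i0 → i ≠ i1 → ∀ e ∈ M i, w ∉ e) :
    colorsAt k M w ≤ 2 := by
  unfold colorsAt
  calc _ ≤ (insert i0 {i1} : Finset (Fin k)).card := by
        refine Finset.card_le_card ?_
        intro i hi
        rw [Finset.mem_filter] at hi
        obtain ⟨-, e, he, hwe⟩ := hi
        rw [Finset.mem_insert, Finset.mem_singleton]
        by_contra hne
        push_neg at hne
        exact h i hne.1 hne.2 e he hwe
    _ ≤ 2 := le_trans (Finset.card_insert_le _ _) (by simp)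

lemma exists_free_color (h : colorsAt k M w < k) : ∃ i, ∀ e ∈ M i, w ∉ e := by
  classical
  by_contra hcon
  push_neg at hcon
  have hsub : (Finset.univ : Finset (Fin k)) ⊆
      Finset.univ.filter (fun i : Fin k => ∃ e ∈ M i, w ∈ e) := by
    intro i _
    rw [Finset.mem_filter]
    obtain ⟨e, he, hwe⟩ := hcon i
    exact ⟨Finset.mem_univ i, e, he, hwe⟩
  have := Finset.card_le_card hsub
  simp only [Finset.card_univ, Fintype.card_fin] at this
  unfold colorsAt at h
  omega

lemma colorsAt_update_le (i₀ : Fin k) (e₀ : Sym2 V) :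
    colorsAt k (Function.update M i₀ (insert e₀ (M i₀))) w ≤ colorsAt k M w + 1 := by
  unfold colorsAt
  calc _ ≤ (insert i₀ (Finset.univ.filter (fun i : Fin k => ∃ e ∈ M i, w ∈ e))).card := by
        refine Finset.card_le_card ?_
        intro i hi
        rw [Finset.mem_filter] at hi
        obtain ⟨-, e, he, hwe⟩ := hi
        by_cases hii : i = i₀
        · subst hii; exact Finset.mem_insert_self _ _
        · rw [Function.update_of_ne hii] at he
          exact Finset.mem_insert_of_mem (Finset.mem_filter.2 ⟨Finset.mem_univ i, e, he, hwe⟩)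
    _ ≤ _ + 1 := Finset.card_insert_le _ _

lemma colorsAt_update_eq (i₀ : Fin k) (e₀ : Sym2 V) (hw : w ∉ e₀) :
    colorsAt k (Function.update M i₀ (insert e₀ (M i₀))) w = colorsAt k M w := by
  unfold colorsAt
  congr 1
  ext i
  simp only [Finset.mem_filter, Finset.mem_univ, true_and]
  constructor
  · rintro ⟨e, he, hwe⟩
    by_cases hii : i = i₀
    · subst hii
      rw [Function.update_self] at he
      rcases Finset.mem_insert.1 he with rfl | he'
      · exact absurd hwe hw
      · exact ⟨e, he', hwe⟩
    · rw [Function.update_of_ne hii] at he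
      exact ⟨e, he, hwe⟩
  · rintro ⟨e, he, hwe⟩
    refine ⟨e, ?_, hwe⟩
    by_cases hii : i = i₀
    · subst hii
      rw [Function.update_self]
      exact Finset.mem_insert_of_mem he
    · rw [Function.update_of_ne hii]
      exact he

end colorsAtAPI

lemma QLemma {V : Type*} [Fintype V] [DecidableEq V] (G : SimpleGraph V) (f : V → V)
    (hf : ∀ v, G.Adj v (f v)) (k : ℕ) (hk : 2 ≤ k)
    (hload : ∀ v, (fiberF f v).card ≤ k) :
    ∀ n (S : Finset V), S.card ≤ n → (∀ w ∈ S, f w ∈ S) →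
    ∃ M : Fin k → Finset (Sym2 V),
      (∀ i, IsMatching G (M i)) ∧
      (∀ i, ∀ e ∈ M i, ∃ w ∈ S, e = s(w, f w)) ∧
      (∀ w ∈ S, KC f S w = ∅ → ∃ i, ∃ e ∈ M i, w ∈ e) ∧
      (∀ w : V, colorsAt k M w + (KC f S w).card ≤ k) := by
  classical
  have hKCfib : ∀ (S : Finset V) w, KC f S w ⊆ fiberF f w := by
    intro S w x hx
    exact mem_fiberF.2 (mem_KC.1 hx).1
  have hKCle : ∀ (S : Finset V) w, (KC f S w).card ≤ k := fun S w =>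
    le_trans (Finset.card_le_card (hKCfib S w)) (hload w)
  intro n
  induction n with
  | zero =>
      intro S hcard _
      have hS : S = ∅ := Finset.card_eq_zero.1 (Nat.le_zero.1 hcard)
      subst hS
      refine ⟨fun _ => ∅, fun i => ⟨by simp, by simp⟩, by simp, by simp, ?_⟩
      intro w
      rw [colorsAt_eq_zero (by simp)]
      simpa using hKCle ∅ w
  | succ n ih =>
      intro S hcard hcl
      by_cases hsrc : ∃ u ∈ S, ∀ w ∈ S, f w ≠ u
      · -- peel a source u
        obtain ⟨u, huS, hufree⟩ := hsrc
        set S' : Finset V := S.erase u with hS'def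
        have hS'sub : S' ⊆ S := Finset.erase_subset _ _
        have huS' : u ∉ S' := Finset.notMem_erase _ _
        have hmemS : ∀ c, c ∈ S ↔ c ∈ S' ∨ c = u := by
          intro c
          rw [hS'def, Finset.mem_erase]
          constructor
          · intro h
            by_cases hc : c = u
            · exact Or.inr hc
            · exact Or.inl ⟨hc, h⟩
          · rintro (⟨-, h⟩ | rfl)
            · exact h
            · exact huS
        have hS'card : S'.card ≤ n := by
          rw [hS'def, Finset.card_erase_of_mem huS]; omega
        have hS'cl : ∀ w ∈ S', f w ∈ S' := by
          intro w hw
          rw [hS'def, Finset.mem_erase]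
          exact ⟨hufree w (hS'sub hw), hcl w (hS'sub hw)⟩
        obtain ⟨M', h1, h2, h3, h4⟩ := ih S' hS'card hS'cl
        have noedge_u : ∀ i, ∀ e ∈ M' i, u ∉ e := by
          intro i e he hue
          obtain ⟨w, hwS', rfl⟩ := h2 i e he
          rw [Sym2.mem_iff] at hue
          rcases hue with rfl | h
          · exact huS' hwS'
          · exact hufree w (hS'sub hwS') h.symm
        have hiterS : ∀ j, f^[j] u ∈ S := by
          intro j
          induction j with
          | zero => simpa using huS
          | succ j ihj => rw [Function.iterate_succ_apply']; exact hcl _ ihj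
        have hu_noncore : ¬ fcore f u := by
          rintro ⟨m, hm, hmu⟩
          obtain ⟨m', rfl⟩ : ∃ m', m = m' + 1 := ⟨m - 1, by omega⟩
          rw [Function.iterate_succ_apply'] at hmu
          exact hufree _ (hiterS m') hmu
        have hvS' : f u ∈ S' := by
          rw [hS'def, Finset.mem_erase]
          exact ⟨(hf u).ne', hcl u huS⟩
        have huv : u ≠ f u := (hf u).ne
        have hKCrel : ∀ w, KC f S w = (KC f S' w).erase u := by
          intro w
          ext c
          simp only [mem_KC, Finset.mem_erase, mem_KC]
          constructor
          · rintro ⟨hc1, hc2, hc3, hc4⟩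
            have hcu : c ≠ u := fun h => hc2 (h ▸ huS)
            exact ⟨hcu, hc1, fun h => hc2 ((hmemS c).2 (Or.inl h)), hc3, hc4⟩
          · rintro ⟨hcu, hc1, hc2, hc3, hc4⟩
            refine ⟨hc1, fun h => ?_, hc3, hc4⟩
            rcases (hmemS c).1 h with h' | h'
            · exact hc2 h'
            · exact hcu h'
        by_cases hkept : kept f u
        · -- add the edge s(u, f u)
          have hu_in : u ∈ KC f S' (f u) :=
            mem_KC.2 ⟨rfl, huS', hu_noncore, hkept⟩
          have hcol : colorsAt k M' (f u) < k := by
            have := h4 (f u)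
            have hpos : 0 < (KC f S' (f u)).card := Finset.card_pos.2 ⟨u, hu_in⟩
            omega
          obtain ⟨i₀, hi₀⟩ := exists_free_color hcol
          set M : Fin k → Finset (Sym2 V) :=
            Function.update M' i₀ (insert (s(u, f u)) (M' i₀)) with hMdef
          have hMi : ∀ i, i ≠ i₀ → M i = M' i := fun i hi =>
            Function.update_of_ne hi _ _
          have hMi₀ : M i₀ = insert (s(u, f u)) (M' i₀) := Function.update_self _ _ _
          have hMsup : ∀ i, M' i ⊆ M i := by
            intro i
            by_cases hi : i = i₀
            · subst hi; rw [hMi₀]; exact Finset.subset_insert _ _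
            · rw [hMi i hi]
          refine ⟨M, ?_, ?_, ?_, ?_⟩
          · intro i
            by_cases hi : i = i₀
            · subst hi
              rw [hMi₀]
              constructor
              · intro e he
                rcases Finset.mem_insert.1 he with rfl | he'
                · exact (SimpleGraph.mem_edgeSet G).2 (hf u)
                · exact (h1 i).1 e he'
              · intro e he e' he' hne v hv
                rcases Finset.mem_insert.1 he with rfl | he₂ <;>
                  rcases Finset.mem_insert.1 he' with rfl | he₂'
                · exact hne rfl
                · rcases Sym2.mem_iff.1 hv.1 with rfl | rfl
                  · exact noedge_u i e' he₂' hv.2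
                  · exact hi₀ e' he₂' hv.2
                · rcases Sym2.mem_iff.1 hv.2 with rfl | rfl
                  · exact noedge_u i e he₂ hv.1
                  · exact hi₀ e he₂ hv.1
                · exact (h1 i).2 e he₂ e' he₂' hne v hv
            · rw [hMi i hi]; exact h1 i
          · intro i e he
            by_cases hi : i = i₀
            · subst hi
              rw [hMi₀] at he
              rcases Finset.mem_insert.1 he with rfl | he'
              · exact ⟨u, huS, rfl⟩
              · obtain ⟨w, hw, rfl⟩ := h2 i e he'
                exact ⟨w, hS'sub hw, rfl⟩
            · rw [hMi i hi] at he
              obtain ⟨w, hw, rfl⟩ := h2 i e he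
              exact ⟨w, hS'sub hw, rfl⟩
          · intro w hwS hKC
            by_cases hwu : w = u
            · subst hwu
              exact ⟨i₀, s(w, f w), by rw [hMi₀]; exact Finset.mem_insert_self _ _,
                Sym2.mem_mk_left _ _⟩
            by_cases hwv : w = f u
            · subst hwv
              exact ⟨i₀, s(u, f u), by rw [hMi₀]; exact Finset.mem_insert_self _ _,
                Sym2.mem_mk_right _ _⟩
            · have hwS' : w ∈ S' := by
                rcases (hmemS w).1 hwS with h | h
                · exact h
                · exact absurd h hwu
              have hKC' : KC f S' w = ∅ := by
                have hu_not : u ∉ KC f S' w := by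
                  intro hu_mem
                  exact hwv (mem_KC.1 hu_mem).1.symm
                rw [hKCrel w, Finset.erase_eq_of_notMem hu_not] at hKC
                exact hKC
              obtain ⟨i, e, he, hwe⟩ := h3 w hwS' hKC'
              exact ⟨i, e, hMsup i he, hwe⟩
          · intro w
            by_cases hwu : w = u
            · subst hwu
              have hKCu : KC f S w = ∅ := by
                rw [Finset.eq_empty_iff_forall_notMem]
                intro c hc
                obtain ⟨hc1, -, hc3, hc4⟩ := mem_KC.1 hc
                exact (kept_iff f w).1 hkept c hc1 hc3 hc4
              rw [hKCu]
              have hcolu : colorsAt k M w ≤ 1 := by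
                refine colorsAt_le_one i₀ ?_
                intro i hi e he hwe
                rw [hMi i hi] at he
                exact noedge_u i e he hwe
              simpa using le_trans (Nat.add_le_add_right hcolu 0) (by omega)
            by_cases hwv : w = f u
            · subst hwv
              have hcards : (KC f S (f u)).card = (KC f S' (f u)).card - 1 := by
                rw [hKCrel (f u), Finset.card_erase_of_mem hu_in]
              have hpos : 0 < (KC f S' (f u)).card := Finset.card_pos.2 ⟨u, hu_in⟩
              have hcolv := colorsAt_update_le (M := M') i₀ (s(u, f u)) (w := f u)
              rw [← hMdef] at hcolv
              have := h4 (f u)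
              omega
            · have hceq : colorsAt k M w = colorsAt k M' w := by
                rw [hMdef]
                refine colorsAt_update_eq i₀ _ ?_
                rw [Sym2.mem_iff]
                push_neg
                exact ⟨hwu, hwv⟩
              have hKCsub : KC f S w ⊆ KC f S' w := by
                rw [hKCrel w]; exact Finset.erase_subset _ _
              have hcc := Finset.card_le_card hKCsub
              have := h4 w
              omega
        · -- u not kept : keep M'
          have hexc : ∃ c, f c = u ∧ ¬ fcore f c ∧ kept f c := by
            by_contra hcon
            push_neg at hcon
            exact hkept ((kept_iff f u).2 (fun c h1' h2' => hcon c h1' h2'))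
          obtain ⟨c, hcu, hcnc, hck⟩ := hexc
          have hcS : c ∉ S := fun h => hufree c h hcu
          have hcKC : c ∈ KC f S u := mem_KC.2 ⟨hcu, hcS, hcnc, hck⟩
          have hu_notin : ∀ w, u ∉ KC f S' w := by
            intro w hmem
            exact hkept (mem_KC.1 hmem).2.2.2
          have hKCeq : ∀ w, KC f S w = KC f S' w := by
            intro w
            rw [hKCrel w, Finset.erase_eq_of_notMem (hu_notin w)]
          refine ⟨M', h1, ?_, ?_, ?_⟩
          · intro i e he
            obtain ⟨w, hw, rfl⟩ := h2 i e he
            exact ⟨w, hS'sub hw, rfl⟩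
          · intro w hwS hKC
            by_cases hwu : w = u
            · subst hwu
              rw [Finset.eq_empty_iff_forall_notMem] at hKC
              exact absurd hcKC (hKC c)
            · have hwS' : w ∈ S' := by
                rcases (hmemS w).1 hwS with h | h
                · exact h
                · exact absurd h hwu
              exact h3 w hwS' (by rw [← hKCeq w]; exact hKC)
          · intro w
            rw [hKCeq w]
            exact h4 w
      · -- no source : S is a disjoint union of cycles
        push_neg at hsrc
        have hinj : ∀ w ∈ S, ∀ x ∈ S, f w = f x → w = x := by
          intro w hw x hx hfx
          have hmap : Function.Surjective
              (fun y : {y // y ∈ S} => (⟨f y.1, hcl y.1 y.2⟩ : {y // y ∈ S})) := by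
            intro z
            obtain ⟨y, hyS, hy⟩ := hsrc z.1 z.2
            exact ⟨⟨y, hyS⟩, Subtype.ext hy⟩
          have hinj' := (Finite.injective_iff_surjective).2 hmap
          have := hinj' (a₁ := ⟨w, hw⟩) (a₂ := ⟨x, hx⟩) (Subtype.ext hfx)
          exact congrArg Subtype.val this
        obtain ⟨M0, M1, hm0, hm1, hE, hC, hOne⟩ :=
          cycLemma G f hf (fun w => (KC f S w).Nonempty) S.card S le_rfl hcl hinj hsrc
        have hk0 : (0 : ℕ) < k := by omega
        have hk1 : (1 : ℕ) < k := by omega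
        set i0 : Fin k := ⟨0, hk0⟩ with hi0def
        set i1 : Fin k := ⟨1, hk1⟩ with hi1def
        have hi01 : i0 ≠ i1 := by
          intro h
          rw [hi0def, hi1def, Fin.ext_iff] at h
          simp at h
        set Mb : Fin k → Finset (Sym2 V) :=
          fun i => if i = i0 then M0 else if i = i1 then M1 else ∅ with hMbdef
        have hMb0 : Mb i0 = M0 := by rw [hMbdef]; dsimp only; rw [if_pos rfl]
        have hMb1 : Mb i1 = M1 := by
          rw [hMbdef]; dsimp only; rw [if_neg (Ne.symm hi01), if_pos rfl]
        have hMbo : ∀ i, i ≠ i0 → i ≠ i1 → Mb i = ∅ := by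
          intro i h0 h1
          rw [hMbdef]; dsimp only; rw [if_neg h0, if_neg h1]
        have hMbe : ∀ i e, e ∈ Mb i → (e ∈ M0 ∨ e ∈ M1) := by
          intro i e he
          by_cases h0 : i = i0
          · subst h0; rw [hMb0] at he; exact Or.inl he
          · by_cases h1 : i = i1
            · subst h1; rw [hMb1] at he; exact Or.inr he
            · rw [hMbo i h0 h1] at he; exact absurd he (Finset.notMem_empty e)
        refine ⟨Mb, ?_, ?_, ?_, ?_⟩
        · intro i
          by_cases h0 : i = i0
          · subst h0; rw [hMb0]; exact hm0
          · by_cases h1 : i = i1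
            · subst h1; rw [hMb1]; exact hm1
            · rw [hMbo i h0 h1]; exact ⟨by simp, by simp⟩
        · intro i e he
          obtain ⟨w, hwS, -, rfl⟩ := hE e (hMbe i e he)
          exact ⟨w, hwS, rfl⟩
        · intro w hwS hKC
          have hnP : ¬ (KC f S w).Nonempty := by
            rw [hKC]; exact Finset.not_nonempty_empty
          rcases hC w hwS hnP with ⟨e, he, hwe⟩ | ⟨e, he, hwe⟩
          · exact ⟨i0, e, by rw [hMb0]; exact he, hwe⟩
          · exact ⟨i1, e, by rw [hMb1]; exact he, hwe⟩
        · intro w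
          have hvertsS : ∀ e, (e ∈ M0 ∨ e ∈ M1) → ∀ v ∈ e, v ∈ S := by
            intro e he v hv
            obtain ⟨x, hxS, -, rfl⟩ := hE e he
            rcases Sym2.mem_iff.1 hv with rfl | rfl
            · exact hxS
            · exact hcl x hxS
          by_cases hwS : w ∈ S
          · by_cases hP : (KC f S w).Nonempty
            · obtain ⟨p, hpS, hpw⟩ := hsrc w hwS
              have hKCsub : KC f S w ⊆ (fiberF f w).erase p := by
                intro x hx
                obtain ⟨hx1, hx2, -, -⟩ := mem_KC.1 hx
                rw [Finset.mem_erase]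
                exact ⟨fun h => hx2 (h ▸ hpS), mem_fiberF.2 hx1⟩
              have hpfib : p ∈ fiberF f w := mem_fiberF.2 hpw
              have hKCcard : (KC f S w).card ≤ k - 1 := by
                have h1' := Finset.card_le_card hKCsub
                rw [Finset.card_erase_of_mem hpfib] at h1'
                have := hload w
                omega
              have hcol : colorsAt k Mb w ≤ 1 := by
                rcases hOne w hP with h | h
                · refine colorsAt_le_one i1 ?_
                  intro i hi e he hwe
                  by_cases h0 : i = i0
                  · subst h0; rw [hMb0] at he; exact h e he hwe
                  · rw [hMbo i h0 hi] at he
                    exact Finset.notMem_empty e he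
                · refine colorsAt_le_one i0 ?_
                  intro i hi e he hwe
                  by_cases h1 : i = i1
                  · subst h1; rw [hMb1] at he; exact h e he hwe
                  · rw [hMbo i hi h1] at he
                    exact Finset.notMem_empty e he
              omega
            · rw [Finset.not_nonempty_iff_eq_empty] at hP
              rw [hP]
              have hcol : colorsAt k Mb w ≤ 2 := by
                refine colorsAt_le_two i0 i1 ?_
                intro i hi0 hi1 e he hwe
                rw [hMbo i hi0 hi1] at he
                exact Finset.notMem_empty e he
              simpa using le_trans (Nat.add_le_add_right hcol 0) (by omega)
          · have hcol : colorsAt k Mb w = 0 := by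
              refine colorsAt_eq_zero ?_
              intro i e he hwe
              exact hwS (hvertsS e (hMbe i e he) w hwe)
            rw [hcol]
            simpa using hKCle S w

lemma exists_cover {V : Type*} [Fintype V] [DecidableEq V] (G : SimpleGraph V)
    (f : V → V) (hf : ∀ v, G.Adj v (f v)) (k : ℕ) (hk : 2 ≤ k)
    (hload : ∀ v, (fiberF f v).card ≤ k) :
    ∃ Ms : Fin k → Finset (Sym2 V), IsMatchingCover G k Ms := by
  classical
  obtain ⟨M, h1, h2, h3, h4⟩ := QLemma G f hf k hk hload (Fintype.card V)
    Finset.univ (by simp) (by simp)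
  refine ⟨M, h1, ?_⟩
  intro v
  refine h3 v (Finset.mem_univ v) ?_
  rw [Finset.eq_empty_iff_forall_notMem]
  intro c hc
  exact (mem_KC.1 hc).2.1 (Finset.mem_univ c)

lemma naf_of_cover {V : Type*} [Fintype V] [DecidableEq V] (G : SimpleGraph V)
    (k : ℕ) (Ms : Fin k → Finset (Sym2 V)) (h : IsMatchingCover G k Ms) :
    ∃ f : V → V, IsNAF G f ∧ nafLoad f ≤ k := by
  classical
  have h2 : ∀ v : V, ∃ (i : Fin k) (e : Sym2 V), e ∈ Ms i ∧ v ∈ e := by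
    intro v; obtain ⟨i, e, he, hv⟩ := h.2 v; exact ⟨i, e, he, hv⟩
  choose ci ce hce hve using h2
  set f : V → V := fun v => Sym2.Mem.other (hve v) with hfdef
  have hspec : ∀ v, s(v, f v) = ce v := fun v => Sym2.other_spec (hve v)
  have hmemedge : ∀ v, ce v ∈ G.edgeSet := fun v => (h.1 (ci v)).1 _ (hce v)
  have hadj : ∀ v, G.Adj v (f v) := by
    intro v
    have hed := hmemedge v
    rw [← hspec v] at hed
    exact (SimpleGraph.mem_edgeSet G).1 hed
  have hfib : ∀ w, (Finset.univ.filter (fun u => f u = w)).card ≤ k := by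
    intro w
    refine le_trans (Finset.card_le_card_of_injOn (t := Finset.univ) ci
      (fun u _ => Finset.mem_univ (ci u)) ?_) (by simp)
    intro u hu u' hu' hii
    rw [Finset.mem_coe, Finset.mem_filter] at hu hu'
    have hwu : w ∈ ce u := by
      have hfu : f u ∈ ce u := Sym2.other_mem (hve u)
      rw [hu.2] at hfu; exact hfu
    have hwu' : w ∈ ce u' := by
      have hfu : f u' ∈ ce u' := Sym2.other_mem (hve u')
      rw [hu'.2] at hfu; exact hfu
    have hedge : ce u = ce u' := by
      by_contra hne
      exact (h.1 (ci u)).2 _ (hce u) _ (hii ▸ hce u') hne w ⟨hwu, hwu'⟩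
    have h1 : s(u, w) = ce u := by rw [← hu.2]; exact hspec u
    have h1' : s(u', w) = ce u' := by rw [← hu'.2]; exact hspec u'
    have h3 : s(u, w) = s(u', w) := h1.trans (hedge.trans h1'.symm)
    have hne_uw : u ≠ w := by
      have hed := hmemedge u
      rw [← h1] at hed
      exact ((SimpleGraph.mem_edgeSet G).1 hed).ne
    rcases Sym2.eq_iff.1 h3 with ⟨h4, -⟩ | ⟨h4, -⟩
    · exact h4
    · exact absurd h4 hne_uw
  refine ⟨f, hadj, ?_⟩
  unfold nafLoad
  rw [Finset.sup_le_iff]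
  intro w _
  exact hfib w

/-- For every finite graph with no isolated vertices, the minimum NAF load equals the
matching cover number, unless the minimum NAF load equals `1`, in which case the
matching cover number is `1` or `2`. -/
theorem minNafLoad_eq_matchingCoverNumber {V : Type*} [Fintype V] [DecidableEq V]
    (G : SimpleGraph V) (hiso : ∀ v : V, ∃ w, G.Adj v w) :
    (minNafLoad G ≠ 1 → minNafLoad G = matchingCoverNumber G) ∧
    (minNafLoad G = 1 → matchingCoverNumber G = 1 ∨ matchingCoverNumber G = 2) := by
  classical
  by_cases hV : IsEmpty V
  · have hload0 : minNafLoad G = 0 := by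
      have hmem : (0:ℕ) ∈ {k : ℕ | ∃ f : V → V, IsNAF G f ∧ nafLoad f = k} := by
        refine ⟨fun v => v, fun v => (hV.elim v), ?_⟩
        unfold nafLoad
        rw [Finset.univ_eq_empty, Finset.sup_empty]
        rfl
      have h1 : minNafLoad G ≤ 0 := Nat.sInf_le hmem
      omega
    have hmc0 : matchingCoverNumber G = 0 := by
      have hmem : (0:ℕ) ∈ {k : ℕ | ∃ Ms : Fin k → Finset (Sym2 V),
          IsMatchingCover G k Ms} := ⟨fun i => i.elim0, fun i => i.elim0,
        fun v => (hV.elim v)⟩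
      have h1 : matchingCoverNumber G ≤ 0 := Nat.sInf_le hmem
      omega
    refine ⟨fun _ => by rw [hload0, hmc0], fun h => absurd h (by rw [hload0]; omega)⟩
  · have hne : Nonempty V := not_isEmpty_iff.1 hV
    obtain ⟨v₀⟩ := hne
    have hsetN : {k : ℕ | ∃ f : V → V, IsNAF G f ∧ nafLoad f = k}.Nonempty := by
      refine ⟨nafLoad (fun v => Classical.choose (hiso v)),
        fun v => Classical.choose (hiso v), fun v => Classical.choose_spec (hiso v), rfl⟩
    have hmin_mem : ∃ f : V → V, IsNAF G f ∧ nafLoad f = minNafLoad G :=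
      Nat.sInf_mem hsetN
    obtain ⟨f₀, hf₀, hl₀⟩ := hmin_mem
    have hfib : ∀ v, (fiberF f₀ v).card ≤ minNafLoad G := by
      intro v
      have hfe : fiberF f₀ v = Finset.univ.filter (fun u => f₀ u = v) := by
        ext c; rw [mem_fiberF, Finset.mem_filter]; simp
      rw [hfe, ← hl₀]
      unfold nafLoad
      exact Finset.le_sup (f := fun v => (Finset.univ.filter (fun u => f₀ u = v)).card)
        (Finset.mem_univ v)
    have hl1 : 1 ≤ minNafLoad G := by
      have h1 : 1 ≤ (fiberF f₀ (f₀ v₀)).card :=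
        Finset.card_pos.2 ⟨v₀, mem_fiberF.2 rfl⟩
      exact le_trans h1 (hfib (f₀ v₀))
    obtain ⟨Ms, hMs⟩ := exists_cover G f₀ hf₀ (max (minNafLoad G) 2)
      (le_max_right _ _) (fun v => le_trans (hfib v) (le_max_left _ _))
    have hmcle : matchingCoverNumber G ≤ max (minNafLoad G) 2 :=
      Nat.sInf_le ⟨Ms, hMs⟩
    have hmc_mem : ∃ Mc : Fin (matchingCoverNumber G) → Finset (Sym2 V),
        IsMatchingCover G (matchingCoverNumber G) Mc :=
      Nat.sInf_mem (⟨max (minNafLoad G) 2, Ms, hMs⟩ :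
        {k : ℕ | ∃ Ms : Fin k → Finset (Sym2 V), IsMatchingCover G k Ms}.Nonempty)
    obtain ⟨Mc, hMc⟩ := hmc_mem
    obtain ⟨fc, hfcnaf, hfcload⟩ := naf_of_cover G _ Mc hMc
    have hminle : minNafLoad G ≤ matchingCoverNumber G :=
      le_trans (Nat.sInf_le ⟨fc, hfcnaf, rfl⟩) hfcload
    have hmc1 : 1 ≤ matchingCoverNumber G := by
      by_contra hcon
      obtain ⟨i, -⟩ := hMc.2 v₀
      have := i.isLt
      omega
    constructor
    · intro hlne1
      have hl2 : 2 ≤ minNafLoad G := by omega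
      rw [max_eq_left hl2] at hmcle
      omega
    · intro hl1'
      rw [hl1', max_eq_right (by omega)] at hmcle
      omega
end
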